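/- arXiv:quant-ph/0307071 — 4 statements merged into one kernel-verified Lean document; each statement's English description precedes it below -/
import Mathlib

section
/- There exists N such that for all n ≥ N and every prime p the following holds. For every query function g : X̂_{n,p} → {−1,+1}, the number of normalized booleanized linear functions L_a ∈ 𝓛_{n,p} that are not p^{−n/3}-independent from g is at most p^{2n/3+2}. -/
open Finset Function

lemma fiber_card {G H : Type*} [AddCommGroup G] [Fintype G] [DecidableEq H]
    [AddCommGroup H] [Fintype H] (f : G →+ H) (hs : Function.Surjective f) (c : H) :
    ((Finset.univ : Finset G).filter fun g => f g = c).card * Fintype.card H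
      = Fintype.card G := by
  have key : ∀ c d : H, ((Finset.univ : Finset G).filter fun g => f g = c).card =
      ((Finset.univ : Finset G).filter fun g => f g = d).card := by
    intro c d
    obtain ⟨g0, hg0⟩ := hs (d - c)
    apply Finset.card_bij (fun g _ => g + g0)
    · intro a ha
      simp only [mem_filter, mem_univ, true_and] at *
      rw [map_add, ha, hg0]; abel
    · intro a _ b _ h; exact add_right_cancel h
    · intro b hb
      simp only [mem_filter, mem_univ, true_and] at *
      refine ⟨b - g0, ?_, by abel⟩
      rw [map_sub, hb, hg0]; abel
  have h2 := Finset.card_eq_sum_card_fiberwise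
    (f := fun g : G => f g) (s := Finset.univ) (t := Finset.univ) (fun x _ => mem_univ _)
  rw [Finset.card_univ] at h2
  rw [h2, Finset.sum_congr rfl (fun d _ => (key d c))]
  simp [Finset.sum_const, mul_comm]

lemma count_one {p : ℕ} [Fact p.Prime] {ι : Type*} [Fintype ι] [DecidableEq ι]
    (w : ι → ZMod p) (hw : w ≠ 0) (c : ZMod p) :
    ((Finset.univ : Finset (ι → ZMod p)).filter fun b => ∑ i, b i * w i = c).card * p
      = p ^ Fintype.card ι := by
  haveI : NeZero p := ⟨(Fact.out : p.Prime).ne_zero⟩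
  obtain ⟨i₀, hi₀⟩ : ∃ i, w i ≠ 0 := by
    by_contra h; push_neg at h; exact hw (funext h)
  set F : (ι → ZMod p) →+ ZMod p :=
    AddMonoidHom.mk' (fun b => ∑ i, b i * w i)
      (by intro a b; simp [add_mul, Finset.sum_add_distrib]) with hFdef
  have hF : ∀ b, F b = ∑ i, b i * w i := fun b => rfl
  have hs : Function.Surjective F := by
    intro c
    refine ⟨(Pi.single i₀ (c * (w i₀)⁻¹) : ι → ZMod p), ?_⟩
    rw [hF]
    simp only [Pi.single_apply, ite_mul, zero_mul]
    rw [Finset.sum_ite_eq' Finset.univ i₀ (fun i => c * (w i₀)⁻¹ * w i)]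
    simp [mul_assoc, inv_mul_cancel₀ hi₀]
  have h := fiber_card F hs c
  simp only [hF] at h
  rw [Fintype.card_fun, ZMod.card] at h
  convert h using 2

lemma count_two {p : ℕ} [Fact p.Prime] {ι : Type*} [Fintype ι] [DecidableEq ι]
    (w z : ι → ZMod p) (hw : w ≠ 0) (hz : ∀ lam : ZMod p, z ≠ lam • w) (c d : ZMod p) :
    ((Finset.univ : Finset (ι → ZMod p)).filter
        fun b => ∑ i, b i * w i = c ∧ ∑ i, b i * z i = d).card * p ^ 2
      = p ^ Fintype.card ι := by
  haveI : NeZero p := ⟨(Fact.out : p.Prime).ne_zero⟩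
  obtain ⟨i₀, hi₀⟩ : ∃ i, w i ≠ 0 := by
    by_contra h; push_neg at h; exact hw (funext h)
  set lam : ZMod p := z i₀ * (w i₀)⁻¹ with hlam
  set z' : ι → ZMod p := z - lam • w with hz'
  have hz'i₀ : z' i₀ = 0 := by
    simp [hz', hlam, Pi.sub_apply, mul_assoc, inv_mul_cancel₀ hi₀]
  obtain ⟨j, hj⟩ : ∃ j, z' j ≠ 0 := by
    by_contra h; push_neg at h
    refine hz lam (funext fun i => ?_)
    have := h i; simp only [hz', Pi.sub_apply, sub_eq_zero] at this
    simpa using this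
  have hji : j ≠ i₀ := fun h => hj (h ▸ hz'i₀)
  set F : (ι → ZMod p) →+ (ZMod p × ZMod p) :=
    AddMonoidHom.mk' (fun b => (∑ i, b i * w i, ∑ i, b i * z i))
      (by intro a b; simp [add_mul, Finset.sum_add_distrib, Prod.ext_iff]) with hFdef
  have hF : ∀ b, F b = (∑ i, b i * w i, ∑ i, b i * z i) := fun b => rfl
  have hs : Function.Surjective F := by
    rintro ⟨s, t⟩
    set β : ZMod p := (z' j)⁻¹ * (t - lam * s) with hβ
    set α : ZMod p := (w i₀)⁻¹ * (s - β * w j) with hα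
    refine ⟨(Pi.single i₀ α + Pi.single j β : ι → ZMod p), ?_⟩
    have hsum : ∀ v : ι → ZMod p,
        ∑ i, (Pi.single i₀ α + Pi.single j β : ι → ZMod p) i * v i
          = α * v i₀ + β * v j := by
      intro v
      have key : ∀ i, (Pi.single i₀ α + Pi.single j β : ι → ZMod p) i * v i
          = (if i = i₀ then α * v i else 0) + (if i = j then β * v i else 0) := by
        intro i
        simp [Pi.single_apply, add_mul, ite_mul]
      rw [Finset.sum_congr rfl (fun i _ => key i), Finset.sum_add_distrib,
        Finset.sum_ite_eq' Finset.univ i₀ (fun i => α * v i),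
        Finset.sum_ite_eq' Finset.univ j (fun i => β * v i)]
      simp
    have hbw : α * w i₀ + β * w j = s := by
      rw [hα]; field_simp; ring
    have hz'j : z j = z' j + lam * w j := by simp [hz']
    have hzi₀ : z i₀ = lam * w i₀ := by
      rw [hlam, mul_assoc, inv_mul_cancel₀ hi₀, mul_one]
    have hβz : β * z' j = t - lam * s := by
      rw [hβ]; field_simp
    have hbz : α * z i₀ + β * z j = t := by
      rw [hzi₀, hz'j]
      calc α * (lam * w i₀) + β * (z' j + lam * w j)
          = lam * (α * w i₀ + β * w j) + β * z' j := by ring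
        _ = t := by rw [hbw, hβz]; ring
    rw [hF, Prod.ext_iff]
    exact ⟨(hsum w).trans hbw, (hsum z).trans hbz⟩
  have h := fiber_card F hs (c, d)
  simp only [hF, Prod.mk.injEq] at h
  rw [Fintype.card_fun, ZMod.card, Fintype.card_prod, ZMod.card, ← sq] at h
  convert h using 2

lemma sum_split {M : Type*} [AddCommMonoid M] {n : ℕ} [NeZero n] (f : Fin n → M) :
    ∑ i, f i = f 0 + ∑ i : {i : Fin n // (i : ℕ) ≠ 0}, f i.1 := by
  classical
  have h1 : ∀ i : Fin n, i ∈ Finset.univ.erase (0 : Fin n) ↔ (i : ℕ) ≠ 0 := by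
    intro i
    simp [Fin.ext_iff, -Fin.val_eq_zero_iff]
  rw [← Finset.sum_subtype (Finset.univ.erase 0) h1 f]
  exact (Finset.add_sum_erase Finset.univ f (Finset.mem_univ 0)).symm

lemma card_I {n : ℕ} (hn : 3 ≤ n) :
    Fintype.card {i : Fin n // (i : ℕ) ≠ 0} = n - 1 := by
  have h1 : Fintype.card {i : Fin n // (i : ℕ) = 0} = 1 := by
    haveI : NeZero n := ⟨by omega⟩
    rw [Fintype.card_eq_one_iff]
    refine ⟨⟨0, by simp⟩, fun b => Subtype.ext (by
      have := b.2
      simp [Fin.ext_iff, this])⟩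
  have := Fintype.card_subtype_compl (p := fun i : Fin n => (i : ℕ) = 0)
  rw [h1, Fintype.card_fin] at this
  exact this


/-- The domain `X̂_{n,p}`: vectors over `ℤ_p` whose last `n-1` coordinates are
not all zero. -/
def Xhat (n p : ℕ) : Set (Fin n → ZMod p) :=
  {x | ∃ i : Fin n, (i : ℕ) ≠ 0 ∧ x i ≠ 0}

/-- The positive set of the booleanized linear function `L_a`. -/
def posSet (n p : ℕ) (a : Fin n → ZMod p) : Set (Fin n → ZMod p) :=
  {x ∈ Xhat n p | ∑ i, a i * x i = 1}

/-- Expectation of `g` over the uniform distribution on the finite set `S`. -/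
noncomputable def expectOn {α : Type*} (S : Set α) (g : α → ℝ) : ℝ :=
  (∑ᶠ x ∈ S, g x) / S.ncard

/-- `L_a` is normalized: `a[0] = 1`. -/
def Normalized (n p : ℕ) (a : Fin n → ZMod p) : Prop :=
  ∀ i : Fin n, (i : ℕ) = 0 → a i = 1

/-- `L_a` is `ξ`-independent from the query function `g`. -/
def XiIndep (n p : ℕ) (a : Fin n → ZMod p) (g : (Fin n → ZMod p) → ℝ) (ξ : ℝ) : Prop :=
  |expectOn (posSet n p a) g - expectOn (Xhat n p) g| ≤ ξ

set_option maxHeartbeats 1000000 in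
/-- for any query function `g : X̂_{n,p} → {-1,+1}`, at most
`p^(2n/3+2)` normalized booleanized linear functions are not
`p^(-n/3)`-independent from `g`. -/
theorem stmt1 : ∃ N : ℕ, ∀ n : ℕ, N ≤ n → ∀ p : ℕ, p.Prime →
    ∀ g : (Fin n → ZMod p) → ℝ, (∀ x ∈ Xhat n p, g x = 1 ∨ g x = -1) →
    (({a : Fin n → ZMod p | Normalized n p a ∧
        ¬ XiIndep n p a g ((p : ℝ) ^ (-(n : ℝ) / 3))}).ncard : ℝ)
      ≤ (p : ℝ) ^ (2 * (n : ℝ) / 3 + 2) := by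
  classical
  refine ⟨3, fun n hn p hp g hg => ?_⟩
  haveI hpf : Fact p.Prime := ⟨hp⟩
  haveI : NeZero p := ⟨hp.ne_zero⟩
  haveI : NeZero n := ⟨by omega⟩
  have hp2 : 2 ≤ p := hp.two_le
  have e32 : n - 3 + 2 = n - 1 := by omega
  have e21 : n - 2 + 1 = n - 1 := by omega
  have e23 : n - 2 = n - 3 + 1 := by omega
  have e2n : n - 3 + 1 + n = 2 * n - 2 := by omega
  have e22 : 2 + (n - 2) * 2 = 2 * n - 2 := by omega
  set I := {i : Fin n // (i : ℕ) ≠ 0} with hI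
  set ξ : ℝ := (p : ℝ) ^ (-(n : ℝ) / 3) with hξ
  -- the embedding of free coordinates into normalized vectors
  set emb : (I → ZMod p) → (Fin n → ZMod p) :=
    fun b i => if h : (i : ℕ) = 0 then 1 else b ⟨i, h⟩ with hemb
  have hembinj : Function.Injective emb := by
    intro b b' hbb
    funext i
    have := congrFun hbb i.1
    simpa [hemb, dif_neg i.2, -Fin.val_eq_zero_iff] using this
  have hembnorm : ∀ b, Normalized n p (emb b) := by
    intro b i hi
    simp [hemb, hi, -Fin.val_eq_zero_iff]
  -- finset versions of the domain
  set Xf : Finset (Fin n → ZMod p) :=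
    Finset.univ.filter (fun x => ∃ i : Fin n, (i : ℕ) ≠ 0 ∧ x i ≠ 0) with hXf
  have hXmem : ∀ x, x ∈ Xf ↔ x ∈ Xhat n p := by
    intro x; simp [hXf, Xhat]
  -- restriction
  set rx : (Fin n → ZMod p) → (I → ZMod p) := fun x i => x i.1 with hrx
  set d : (Fin n → ZMod p) → ZMod p := fun x => 1 - x 0 with hd
  have hrxne : ∀ x ∈ Xf, rx x ≠ 0 := by
    intro x hx h0
    obtain ⟨i, hi1, hi2⟩ := (hXmem x).1 hx
    exact hi2 (by simpa [hrx] using congrFun h0 ⟨i, hi1⟩)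
  -- positive sets
  set Sf : (I → ZMod p) → Finset (Fin n → ZMod p) :=
    fun b => Xf.filter (fun x => ∑ i : I, b i * rx x i = d x) with hSf
  have hsum_emb : ∀ (b : I → ZMod p) (x : Fin n → ZMod p),
      ∑ i, emb b i * x i = x 0 + ∑ i : I, b i * rx x i := by
    intro b x
    rw [sum_split (fun i => emb b i * x i)]
    congr 1
    · simp [hemb]
    · exact Finset.sum_congr rfl fun i _ => by simp [hemb, dif_neg i.2, hrx, -Fin.val_eq_zero_iff]
  have hSmem : ∀ (b : I → ZMod p) (x : Fin n → ZMod p),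
      (∑ i, emb b i * x i = 1) ↔ (∑ i : I, b i * rx x i = d x) := by
    intro b x
    rw [hsum_emb, hd]
    constructor
    · intro h1; linear_combination h1
    · intro h1; linear_combination h1
  have hposSet : ∀ b, posSet n p (emb b) = ↑(Sf b) := by
    intro b
    ext x
    simp only [posSet, Set.mem_setOf_eq, hSf, Finset.coe_filter, ← hXmem x, hSmem b x]
  -- cardinality of the positive sets
  have hScard : ∀ b, (Sf b).card = p ^ (n - 1) - 1 := by
    intro b
    have hne : emb b ≠ 0 := by
      intro h0
      have := congrFun h0 0
      simp [hemb] at this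
    have hSfeq : Sf b = Xf.filter (fun x => ∑ i, emb b i * x i = 1) := by
      rw [hSf]
      exact Finset.filter_congr fun x _ => (hSmem b x).symm
    set x₁ : Fin n → ZMod p := Pi.single 0 1 with hx₁
    have hx₁z : ∀ i : I, x₁ i.1 = 0 := by
      intro i
      exact Pi.single_eq_of_ne (fun hc => i.2 (by rw [hc]; simp)) 1
    have hx₁P : ∑ i, emb b i * x₁ i = 1 := by
      rw [hsum_emb]
      have hz : ∀ i : I, b i * rx x₁ i = 0 := fun i => by
        show b i * x₁ i.1 = 0
        rw [hx₁z i, mul_zero]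
      rw [Finset.sum_congr rfl fun i _ => hz i, Finset.sum_const, smul_zero, add_zero, hx₁]
      simp
    have hx₁X : x₁ ∉ Xf := by
      simp only [hXf, Finset.mem_filter, Finset.mem_univ, true_and, not_exists]
      intro i
      rw [not_and]
      intro hi
      simp [hx₁z ⟨i, hi⟩]
    have hfe : Xf.filter (fun x => ∑ i, emb b i * x i = 1)
        = (Finset.univ.filter (fun x => ∑ i, emb b i * x i = 1)).erase x₁ := by
      ext x
      simp only [Finset.mem_filter, Finset.mem_erase, Finset.mem_univ, true_and]
      constructor
      · rintro ⟨hxX, hxP⟩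
        exact ⟨fun hc => hx₁X (hc ▸ hxX), hxP⟩
      · rintro ⟨hxne, hxP⟩
        refine ⟨?_, hxP⟩
        by_contra hxX
        have hall : ∀ i : I, x i.1 = 0 := by
          intro i
          by_contra h0
          apply hxX
          simp only [hXf, Finset.mem_filter, Finset.mem_univ, true_and]
          exact ⟨i.1, i.2, h0⟩
        have hx0 : x 0 = 1 := by
          have h5 := hxP
          rw [hsum_emb] at h5
          simpa [hrx, hall] using h5
        refine hxne (funext fun i => ?_)
        by_cases h0 : (i : ℕ) = 0
        · have hi0 : i = 0 := Fin.ext (by simp [h0])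
          rw [hi0, hx0, hx₁]
          simp
        · exact (hall ⟨i, h0⟩).trans (hx₁z ⟨i, h0⟩).symm
    have hcount := count_one (p := p) (ι := Fin n) (emb b) hne 1
    have hcomm : (Finset.univ.filter (fun x : Fin n → ZMod p => ∑ i, emb b i * x i = 1))
        = (Finset.univ.filter (fun x : Fin n → ZMod p => ∑ i, x i * emb b i = 1)) := by
      ext x
      simp only [Finset.mem_filter, Finset.mem_univ, true_and]
      rw [Finset.sum_congr rfl fun i _ => mul_comm (emb b i) (x i)]
    have hcard1 : (Finset.univ.filter (fun x : Fin n → ZMod p => ∑ i, emb b i * x i = 1)).card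
        = p ^ (n - 1) := by
      apply Nat.eq_of_mul_eq_mul_right hp.pos
      have hstep : n - 1 + 1 = n :=
        Nat.succ_pred_eq_of_pos (lt_of_lt_of_le (by norm_num) hn)
      rw [hcomm]
      rw [hcount]
      rw [Fintype.card_fin]
      rw [← pow_succ]
      rw [hstep]
    rw [hSfeq, hfe, Finset.card_erase_of_mem, hcard1]
    simp only [Finset.mem_filter, Finset.mem_univ, true_and]
    exact hx₁P
  -- expectations
  set μ : ℝ := (∑ x ∈ Xf, g x) / Xf.card with hμ
  set h : (Fin n → ZMod p) → ℝ := fun x => g x - μ with hh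
  have hXpos : 0 < Xf.card := by
    rw [Finset.card_pos]
    refine ⟨Pi.single (⟨1, by omega⟩ : Fin n) (1 : ZMod p), ?_⟩
    simp only [hXf, Finset.mem_filter, Finset.mem_univ, true_and]
    exact ⟨⟨1, by omega⟩, by simp, by simp [Pi.single_eq_same]⟩
  have hXle : (Xf.card : ℝ) ≤ (p : ℝ) ^ n := by
    have h1 : Xf.card ≤ p ^ n := by
      calc Xf.card ≤ Fintype.card (Fin n → ZMod p) := Finset.card_le_univ _
        _ = p ^ n := by rw [Fintype.card_fun, ZMod.card, Fintype.card_fin]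
    exact_mod_cast h1
  have hXcne : (Xf.card : ℝ) ≠ 0 := by positivity
  have hsum0 : ∑ x ∈ Xf, h x = 0 := by
    simp only [hh]
    rw [Finset.sum_sub_distrib, Finset.sum_const, nsmul_eq_mul, hμ]
    field_simp; ring
  have hgsq : ∑ x ∈ Xf, g x ^ 2 = Xf.card := by
    rw [Finset.sum_congr rfl (fun x hx => ?_), Finset.sum_const, nsmul_eq_mul, mul_one]
    rcases hg x ((hXmem x).1 hx) with h1 | h1 <;> rw [h1] <;> norm_num
  have hgsum : ∑ x ∈ Xf, g x = Xf.card * μ := by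
    rw [hμ]
    field_simp
  have hsum2 : ∑ x ∈ Xf, h x ^ 2 ≤ (p : ℝ) ^ n := by
    have e1 : ∑ x ∈ Xf, h x ^ 2 = ∑ x ∈ Xf, (g x ^ 2 - 2 * μ * g x + μ ^ 2) :=
      Finset.sum_congr rfl fun x _ => by simp only [hh]; ring
    rw [e1, Finset.sum_add_distrib, Finset.sum_sub_distrib, ← Finset.mul_sum, hgsq, hgsum,
      Finset.sum_const, nsmul_eq_mul]
    have hXc0 : (0:ℝ) ≤ Xf.card := Nat.cast_nonneg _
    nlinarith [sq_nonneg μ, mul_nonneg hXc0 (sq_nonneg μ)]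
  set Q : ℝ := ((p ^ (n - 1) - 1 : ℕ) : ℝ) with hQ
  have hpow1 : 1 < p ^ (n - 1) := Nat.one_lt_pow (by omega) hp.one_lt
  have hQpos : 0 < Q := by
    rw [hQ]
    have : 0 < p ^ (n - 1) - 1 := by omega
    exact_mod_cast this
  set T : (I → ZMod p) → ℝ := fun b => ∑ x ∈ Sf b, h x with hT
  have hcoe : ∀ s : Finset (Fin n → ZMod p), expectOn (↑s) g = (∑ x ∈ s, g x) / s.card := by
    intro s
    rw [expectOn, finsum_mem_coe_finset, Set.ncard_coe_finset]
  have hXcoe : Xhat n p = ↑Xf := by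
    ext x
    exact ((hXmem x)).symm
  have hdiff : ∀ b, expectOn (posSet n p (emb b)) g - expectOn (Xhat n p) g = T b / Q := by
    intro b
    rw [hposSet b, hcoe, hXcoe, hcoe, ← hμ]
    have hSg : ∑ x ∈ Sf b, g x = T b + Q * μ := by
      have : ∑ x ∈ Sf b, g x = ∑ x ∈ Sf b, (h x + μ) :=
        Finset.sum_congr rfl fun x _ => by simp [hh]
      rw [this, Finset.sum_add_distrib, Finset.sum_const, nsmul_eq_mul, hScard b, hT, hQ]
    rw [hSg, hScard b, ← hQ]
    field_simp; ring
  -- the bad set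
  set badB : Finset (I → ZMod p) :=
    Finset.univ.filter (fun b => ¬ XiIndep n p (emb b) g ξ) with hbadB
  -- second moment bound
  have hξpos : 0 < ξ := Real.rpow_pos_of_pos (by exact_mod_cast hp.pos) _
  have hmoment : (badB.card : ℝ) * (ξ * Q) ^ 2 ≤ ∑ b : I → ZMod p, T b ^ 2 := by
    have key : ∀ b ∈ badB, (ξ * Q) ^ 2 ≤ T b ^ 2 := by
      intro b hb
      simp only [hbadB, Finset.mem_filter, Finset.mem_univ, true_and] at hb
      rw [XiIndep, hdiff b] at hb
      push_neg at hb
      have h2 : ξ < |T b| / Q := by rwa [abs_div, abs_of_pos hQpos] at hb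
      have h1 : ξ * Q ≤ |T b| := by
        calc ξ * Q ≤ (|T b| / Q) * Q := by nlinarith
          _ = |T b| := by field_simp
      calc (ξ * Q) ^ 2 ≤ |T b| ^ 2 := by
            apply pow_le_pow_left₀ (by positivity) h1
        _ = T b ^ 2 := sq_abs _
    calc (badB.card : ℝ) * (ξ * Q) ^ 2 = ∑ _b ∈ badB, (ξ * Q) ^ 2 := by
          rw [Finset.sum_const, nsmul_eq_mul]
      _ ≤ ∑ b ∈ badB, T b ^ 2 := Finset.sum_le_sum key
      _ ≤ ∑ b : I → ZMod p, T b ^ 2 :=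
          Finset.sum_le_sum_of_subset_of_nonneg (Finset.subset_univ _)
            (fun b _ _ => sq_nonneg _)
  -- counting solutions of the linear systems
  set N' : (Fin n → ZMod p) → (Fin n → ZMod p) → ℕ := fun x y =>
    ((Finset.univ : Finset (I → ZMod p)).filter
      (fun b => ∑ i : I, b i * rx x i = d x ∧ ∑ i : I, b i * rx y i = d y)).card with hN'
  set Par : (Fin n → ZMod p) → Finset (Fin n → ZMod p) := fun x =>
    Xf.filter (fun y => ∃ lam : ZMod p, rx y = lam • rx x) with hPar
  have hcardItot : Fintype.card (I → ZMod p) = p ^ (n - 1) := by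
    rw [Fintype.card_fun, ZMod.card, card_I hn]
  have hNpar : ∀ x ∈ Xf, ∀ y ∈ Xf, y ∉ Par x → N' x y = p ^ (n - 3) := by
    intro x hx y hy hyn
    have hz : ∀ lam : ZMod p, rx y ≠ lam • rx x := by
      intro lam hcon
      exact hyn (Finset.mem_filter.2 ⟨hy, lam, hcon⟩)
    have hc := count_two (rx x) (rx y) (hrxne x hx) hz (d x) (d y)
    rw [card_I hn] at hc
    apply Nat.eq_of_mul_eq_mul_right (show 0 < p ^ 2 by positivity)
    rw [hN', hc, ← pow_add, e32]
  have hNle : ∀ x ∈ Xf, ∀ y, N' x y ≤ p ^ (n - 2) := by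
    intro x hx y
    have hsub : ((Finset.univ : Finset (I → ZMod p)).filter
          (fun b => ∑ i : I, b i * rx x i = d x ∧ ∑ i : I, b i * rx y i = d y))
        ⊆ ((Finset.univ : Finset (I → ZMod p)).filter
          (fun b => ∑ i : I, b i * rx x i = d x)) := by
      intro b hb
      simp only [Finset.mem_filter] at *
      exact ⟨hb.1, hb.2.1⟩
    have hc := count_one (rx x) (hrxne x hx) (d x)
    rw [card_I hn] at hc
    have hcc : ((Finset.univ : Finset (I → ZMod p)).filter
        (fun b => ∑ i : I, b i * rx x i = d x)).card = p ^ (n - 2) := by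
      apply Nat.eq_of_mul_eq_mul_right hp.pos
      rw [hc, ← pow_succ, e21]
    rw [hN', ← hcc]
    exact Finset.card_le_card hsub
  have hParXf : ∀ x, Par x ⊆ Xf := fun x => Finset.filter_subset _ _
  have hParsym : ∀ x ∈ Xf, ∀ y ∈ Par x, x ∈ Par y := by
    intro x hx y hy
    obtain ⟨hyX, lam, hl⟩ := Finset.mem_filter.1 hy
    have hlam : lam ≠ 0 := by
      intro h0
      apply hrxne y hyX
      rw [hl, h0, zero_smul]
    refine Finset.mem_filter.2 ⟨hx, lam⁻¹, ?_⟩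
    rw [hl, smul_smul, inv_mul_cancel₀ hlam, one_smul]
  have hParcard : ∀ x ∈ Xf, (Par x).card ≤ p * (p - 1) := by
    intro x hx
    obtain ⟨i, hi1, hi2⟩ := Finset.mem_filter.1 hx |>.2
    set i₀ : I := ⟨i, hi1⟩ with hi₀
    have hxi₀ : rx x i₀ ≠ 0 := hi2
    have hinj : Set.InjOn (fun y : Fin n → ZMod p => (y 0, y i))
        ↑(Par x) := by
      intro y hy y' hy' heq
      simp only [Prod.mk.injEq] at heq
      obtain ⟨-, lam, hl⟩ := Finset.mem_filter.1 (by exact_mod_cast hy)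
      obtain ⟨-, lam', hl'⟩ := Finset.mem_filter.1 (by exact_mod_cast hy')
      have hli : y i = lam * x i := by
        have := congrFun hl i₀
        simpa [hrx] using this
      have hli' : y' i = lam' * x i := by
        have := congrFun hl' i₀
        simpa [hrx] using this
      have hlameq : lam = lam' := by
        apply mul_right_cancel₀ hi2
        rw [← hli, ← hli', heq.2]
      funext k
      by_cases h0 : (k : ℕ) = 0
      · have hk0 : k = 0 := Fin.ext (by simp [h0])
        rw [hk0]
        exact heq.1
      · have e1 := congrFun hl ⟨k, h0⟩
        have e2 := congrFun hl' ⟨k, h0⟩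
        simp only [hrx, Pi.smul_apply, smul_eq_mul] at e1 e2
        rw [e1, e2, hlameq]
    have hmap : ∀ y ∈ Par x, (y 0, y i) ∈
        (Finset.univ : Finset (ZMod p)) ×ˢ ((Finset.univ : Finset (ZMod p)).erase 0) := by
      intro y hy
      obtain ⟨hyX, lam, hl⟩ := Finset.mem_filter.1 hy
      have hlam : lam ≠ 0 := by
        intro h0
        apply hrxne y hyX
        rw [hl, h0, zero_smul]
      have hyi : y i = lam * x i := by
        have := congrFun hl i₀
        simpa [hrx] using this
      refine Finset.mem_product.2 ⟨Finset.mem_univ _, Finset.mem_erase.2 ⟨?_, Finset.mem_univ _⟩⟩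
      rw [hyi]
      exact mul_ne_zero hlam hi2
    have hcard := Finset.card_le_card_of_injOn _ hmap hinj
    calc (Par x).card ≤ _ := hcard
      _ = p * (p - 1) := by
        rw [Finset.card_product, Finset.card_erase_of_mem (Finset.mem_univ _),
          Finset.card_univ, ZMod.card]
  -- the second moment identity
  have hswap : ∑ b : I → ZMod p, T b ^ 2
      = ∑ x ∈ Xf, ∑ y ∈ Xf, (h x * h y) * (N' x y : ℝ) := by
    have hTx : ∀ b, T b = ∑ x ∈ Xf, ite (∑ i : I, b i * rx x i = d x) (h x) 0 := by
      intro b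
      rw [hT]
      exact Finset.sum_filter _ _
    calc ∑ b : I → ZMod p, T b ^ 2
        = ∑ b : I → ZMod p, ∑ x ∈ Xf, ∑ y ∈ Xf,
            (ite (∑ i : I, b i * rx x i = d x) (h x) 0)
              * (ite (∑ i : I, b i * rx y i = d y) (h y) 0) := by
          refine Finset.sum_congr rfl fun b _ => ?_
          rw [hTx b, sq, Finset.sum_mul_sum]
      _ = ∑ x ∈ Xf, ∑ y ∈ Xf, ∑ b : I → ZMod p,
            ite ((∑ i : I, b i * rx x i = d x) ∧ (∑ i : I, b i * rx y i = d y))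
              (h x * h y) 0 := by
          rw [Finset.sum_comm]
          refine Finset.sum_congr rfl fun x _ => ?_
          rw [Finset.sum_comm]
          refine Finset.sum_congr rfl fun y _ => Finset.sum_congr rfl fun b _ => ?_
          by_cases h1 : (∑ i : I, b i * rx x i = d x) <;>
            by_cases h2 : (∑ i : I, b i * rx y i = d y) <;> simp [h1, h2]
      _ = ∑ x ∈ Xf, ∑ y ∈ Xf, (h x * h y) * (N' x y : ℝ) := by
          refine Finset.sum_congr rfl fun x _ => Finset.sum_congr rfl fun y _ => ?_
          rw [← Finset.sum_filter, Finset.sum_const, nsmul_eq_mul, hN', mul_comm]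
  set pt : ℝ := ((p ^ (n - 3) : ℕ) : ℝ) with hpt
  have hsplit : ∑ x ∈ Xf, ∑ y ∈ Xf, (h x * h y) * (N' x y : ℝ)
      = ∑ x ∈ Xf, ∑ y ∈ Par x, (h x * h y) * ((N' x y : ℝ) - pt) := by
    refine Finset.sum_congr rfl fun x hx => ?_
    have h1 : ∑ y ∈ Xf, (h x * h y) * (N' x y : ℝ)
        = ∑ y ∈ Xf, ((h x * h y) * ((N' x y : ℝ) - pt) + (h x * h y) * pt) :=
      Finset.sum_congr rfl fun y _ => by ring
    rw [h1, Finset.sum_add_distrib]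
    have h2 : ∑ y ∈ Xf, (h x * h y) * pt = 0 := by
      have h3 : ∑ y ∈ Xf, (h x * h y) * pt = (h x * pt) * ∑ y ∈ Xf, h y := by
        rw [Finset.mul_sum]
        exact Finset.sum_congr rfl fun y _ => by ring
      rw [h3, hsum0, mul_zero]
    rw [h2, add_zero]
    symm
    apply Finset.sum_subset (hParXf x)
    intro y hy hyn
    rw [hNpar x hx y hy hyn, hpt]
    simp
  set W₀ : ℝ := pt * ((p : ℝ) - 1) with hW₀
  have hptle : pt ≤ W₀ := by
    rw [hW₀]
    have h1 : (1:ℝ) ≤ (p:ℝ) - 1 := by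
      have : (2:ℝ) ≤ (p:ℝ) := by exact_mod_cast hp2
      linarith
    nlinarith [show (0:ℝ) ≤ pt from by positivity]
  have hW₀nn : 0 ≤ W₀ := le_trans (by positivity) hptle
  have habs2 : ∀ x ∈ Xf, ∀ y ∈ Par x,
      (h x * h y) * ((N' x y : ℝ) - pt) ≤ (h x ^ 2 + h y ^ 2) / 2 * W₀ := by
    intro x hx y hy
    have hNb : |(N' x y : ℝ) - pt| ≤ W₀ := by
      rw [abs_le]
      constructor
      · have : (0:ℝ) ≤ (N' x y : ℝ) := Nat.cast_nonneg _
        linarith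
      · have hle : (N' x y : ℝ) ≤ ((p ^ (n - 2) : ℕ) : ℝ) := by
          exact_mod_cast hNle x hx y
        have heq : ((p ^ (n - 2) : ℕ) : ℝ) - pt = W₀ := by
          rw [hW₀, hpt]
          push_cast
          rw [e23, pow_succ]
          ring
        linarith
    have h2 : |h x * h y| ≤ (h x ^ 2 + h y ^ 2) / 2 := by
      rw [abs_mul, ← sq_abs (h x), ← sq_abs (h y)]
      generalize |h x| = u
      generalize |h y| = v
      nlinarith [sq_nonneg (u - v)]
    calc (h x * h y) * ((N' x y : ℝ) - pt)
        ≤ |(h x * h y) * ((N' x y : ℝ) - pt)| := le_abs_self _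
      _ = |h x * h y| * |(N' x y : ℝ) - pt| := abs_mul _ _
      _ ≤ (h x ^ 2 + h y ^ 2) / 2 * W₀ :=
          mul_le_mul h2 hNb (abs_nonneg _) (by positivity)
  have hAB : ∑ x ∈ Xf, ∑ y ∈ Par x, (h x ^ 2 + h y ^ 2) / 2 * W₀
      ≤ W₀ * ((p:ℝ) * ((p:ℝ) - 1)) * (p:ℝ) ^ n := by
    have hsplit2 : ∀ x ∈ Xf, ∀ y ∈ Par x, (h x ^ 2 + h y ^ 2) / 2 * W₀
        = h x ^ 2 * (W₀ / 2) + h y ^ 2 * (W₀ / 2) := by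
      intros; ring
    have e0 : ∑ x ∈ Xf, ∑ y ∈ Par x, (h x ^ 2 + h y ^ 2) / 2 * W₀
        = (∑ x ∈ Xf, ∑ y ∈ Par x, h x ^ 2 * (W₀ / 2))
          + (∑ x ∈ Xf, ∑ y ∈ Par x, h y ^ 2 * (W₀ / 2)) := by
      rw [← Finset.sum_add_distrib]
      refine Finset.sum_congr rfl fun x hx => ?_
      rw [← Finset.sum_add_distrib]
      exact Finset.sum_congr rfl fun y hy => hsplit2 x hx y hy
    have hcast : ((p * (p - 1) : ℕ) : ℝ) = (p:ℝ) * ((p:ℝ) - 1) := by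
      push_cast [Nat.cast_sub hp.one_le]
      ring
    have hbound1 : ∀ x ∈ Xf, ∑ y ∈ Par x, h x ^ 2 * (W₀ / 2)
        ≤ ((p:ℝ) * ((p:ℝ) - 1)) * (h x ^ 2 * (W₀ / 2)) := by
      intro x hx
      rw [Finset.sum_const, nsmul_eq_mul]
      apply mul_le_mul_of_nonneg_right _ (by positivity)
      rw [← hcast]
      exact_mod_cast hParcard x hx
    have hswap2 : ∑ x ∈ Xf, ∑ y ∈ Par x, h y ^ 2 * (W₀ / 2)
        = ∑ y ∈ Xf, ∑ x ∈ Par y, h y ^ 2 * (W₀ / 2) := by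
      apply Finset.sum_comm'
      intro x y
      constructor
      · rintro ⟨hx, hy⟩
        exact ⟨hParsym x hx y hy, hParXf x hy⟩
      · rintro ⟨hxp, hyX⟩
        exact ⟨hParXf y hxp, hParsym y hyX x hxp⟩
    have hbound2 : ∀ y ∈ Xf, ∑ x ∈ Par y, h y ^ 2 * (W₀ / 2)
        ≤ ((p:ℝ) * ((p:ℝ) - 1)) * (h y ^ 2 * (W₀ / 2)) := by
      intro y hy
      rw [Finset.sum_const, nsmul_eq_mul]
      apply mul_le_mul_of_nonneg_right _ (by positivity)
      rw [← hcast]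
      exact_mod_cast hParcard y hy
    have hsumsq : ∑ x ∈ Xf, ((p:ℝ) * ((p:ℝ) - 1)) * (h x ^ 2 * (W₀ / 2))
        ≤ ((p:ℝ) * ((p:ℝ) - 1)) * (W₀ / 2) * (p:ℝ) ^ n := by
      have e1 : ∑ x ∈ Xf, ((p:ℝ) * ((p:ℝ) - 1)) * (h x ^ 2 * (W₀ / 2))
          = ((p:ℝ) * ((p:ℝ) - 1)) * (W₀ / 2) * ∑ x ∈ Xf, h x ^ 2 := by
        rw [Finset.mul_sum]
        exact Finset.sum_congr rfl fun x _ => by ring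
      rw [e1]
      apply mul_le_mul_of_nonneg_left hsum2
      have hppos : (0:ℝ) < (p:ℝ) := by exact_mod_cast hp.pos
      have h1 : (1:ℝ) ≤ (p:ℝ) - 1 := by
        have : (2:ℝ) ≤ (p:ℝ) := by exact_mod_cast hp2
        linarith
      positivity
    calc ∑ x ∈ Xf, ∑ y ∈ Par x, (h x ^ 2 + h y ^ 2) / 2 * W₀
        = (∑ x ∈ Xf, ∑ y ∈ Par x, h x ^ 2 * (W₀ / 2))
          + (∑ x ∈ Xf, ∑ y ∈ Par x, h y ^ 2 * (W₀ / 2)) := e0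
      _ ≤ (∑ x ∈ Xf, ((p:ℝ) * ((p:ℝ) - 1)) * (h x ^ 2 * (W₀ / 2)))
          + (∑ y ∈ Xf, ((p:ℝ) * ((p:ℝ) - 1)) * (h y ^ 2 * (W₀ / 2))) := by
          rw [hswap2]
          exact add_le_add (Finset.sum_le_sum hbound1) (Finset.sum_le_sum hbound2)
      _ ≤ ((p:ℝ) * ((p:ℝ) - 1)) * (W₀ / 2) * (p:ℝ) ^ n
          + ((p:ℝ) * ((p:ℝ) - 1)) * (W₀ / 2) * (p:ℝ) ^ n := add_le_add hsumsq hsumsq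
      _ = W₀ * ((p:ℝ) * ((p:ℝ) - 1)) * (p:ℝ) ^ n := by ring
  have hWeq : W₀ * ((p:ℝ) * ((p:ℝ) - 1)) * (p:ℝ) ^ n
      = ((p : ℝ) - 1) ^ 2 * (p : ℝ) ^ (2 * n - 2) := by
    have e1 : ((p:ℝ)) ^ (n - 3) * ((p:ℝ)) ^ 1 * ((p:ℝ)) ^ n = (p:ℝ) ^ (2 * n - 2) := by
      rw [← pow_add, ← pow_add, e2n]
    calc W₀ * ((p:ℝ) * ((p:ℝ) - 1)) * (p:ℝ) ^ n
        = ((p : ℝ) - 1) ^ 2 * (((p:ℝ)) ^ (n - 3) * ((p:ℝ)) ^ 1 * ((p:ℝ)) ^ n) := by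
          rw [hW₀, hpt]
          push_cast
          ring
      _ = ((p : ℝ) - 1) ^ 2 * (p : ℝ) ^ (2 * n - 2) := by rw [e1]
  have hsigma : ∑ b : I → ZMod p, T b ^ 2 ≤ ((p : ℝ) - 1) ^ 2 * (p : ℝ) ^ (2 * n - 2) := by
    calc ∑ b : I → ZMod p, T b ^ 2
        = ∑ x ∈ Xf, ∑ y ∈ Par x, (h x * h y) * ((N' x y : ℝ) - pt) := by
          rw [hswap, hsplit]
      _ ≤ ∑ x ∈ Xf, ∑ y ∈ Par x, (h x ^ 2 + h y ^ 2) / 2 * W₀ :=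
          Finset.sum_le_sum fun x hx => Finset.sum_le_sum fun y hy => habs2 x hx y hy
      _ ≤ W₀ * ((p:ℝ) * ((p:ℝ) - 1)) * (p:ℝ) ^ n := hAB
      _ = ((p : ℝ) - 1) ^ 2 * (p : ℝ) ^ (2 * n - 2) := hWeq
  -- final arithmetic
  have hfinal : (badB.card : ℝ) ≤ (p : ℝ) ^ (2 * (n : ℝ) / 3 + 2) := by
    have hppos : (0:ℝ) < (p:ℝ) := by exact_mod_cast hp.pos
    have hpr1 : (1:ℝ) ≤ (p:ℝ) - 1 := by
      have : (2:ℝ) ≤ (p:ℝ) := by exact_mod_cast hp2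
      linarith
    have hc2 : (0:ℝ) < (ξ * Q) ^ 2 := by positivity
    have hKc : (badB.card : ℝ) * (ξ * Q) ^ 2 ≤ ((p:ℝ) - 1) ^ 2 * (p:ℝ) ^ (2 * n - 2) :=
      le_trans hmoment hsigma
    have hQge : (p:ℝ) ^ (n - 2) * ((p:ℝ) - 1) ≤ Q := by
      have hps : p - 1 + 1 = p := Nat.sub_add_cancel hp.one_le
      have h2 : p ^ (n - 2) * (p - 1) + p ^ (n - 2) = p ^ (n - 1) := by
        calc p ^ (n - 2) * (p - 1) + p ^ (n - 2) = p ^ (n - 2) * ((p - 1) + 1) := by ring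
          _ = p ^ (n - 2) * p := by rw [hps]
          _ = p ^ (n - 1) := by rw [← pow_succ, e21]
      have h3 : 1 ≤ p ^ (n - 2) := Nat.one_le_pow _ _ hp.pos
      have h1 : p ^ (n - 2) * (p - 1) ≤ p ^ (n - 1) - 1 := by
        have h4 : p ^ (n - 2) * (p - 1) = p ^ (n - 1) - p ^ (n - 2) :=
          Nat.eq_sub_of_add_eq h2
        rw [h4]
        exact Nat.sub_le_sub_left h3 _
      calc (p:ℝ) ^ (n - 2) * ((p:ℝ) - 1) = ((p ^ (n - 2) * (p - 1) : ℕ) : ℝ) := by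
            push_cast [Nat.cast_sub hp.one_le]
            ring
        _ ≤ Q := by
            rw [hQ]
            exact_mod_cast h1
    have hQnn : (0:ℝ) ≤ (p:ℝ) ^ (n - 2) * ((p:ℝ) - 1) := by
      apply mul_nonneg (pow_nonneg hppos.le _)
      linarith
    have hrexp : (p:ℝ) ^ (2 * (n:ℝ) / 3 + 2) * ξ ^ 2 = (p:ℝ) ^ (2:ℕ) := by
      rw [hξ, ← Real.rpow_natCast ((p:ℝ) ^ (-(n:ℝ) / 3)) 2, ← Real.rpow_mul hppos.le,
        ← Real.rpow_add hppos,
        show 2 * (n:ℝ) / 3 + 2 + (-(n:ℝ) / 3 * (2:ℕ)) = ((2:ℕ):ℝ) by push_cast; ring,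
        Real.rpow_natCast]
    have hB2 : ((p:ℝ) - 1) ^ 2 * (p:ℝ) ^ (2 * n - 2)
        ≤ (p:ℝ) ^ (2 * (n:ℝ) / 3 + 2) * (ξ * Q) ^ 2 := by
      have e1 : (p:ℝ) ^ (2 * (n:ℝ) / 3 + 2) * (ξ * Q) ^ 2 = (p:ℝ) ^ (2:ℕ) * Q ^ 2 := by
        rw [mul_pow, ← mul_assoc, hrexp]
      rw [e1]
      have e2 : ((p:ℝ) ^ (n - 2) * ((p:ℝ) - 1)) ^ 2 ≤ Q ^ 2 :=
        pow_le_pow_left₀ hQnn hQge 2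
      have e3 : (p:ℝ) ^ (2 * n - 2) = (p:ℝ) ^ (2:ℕ) * ((p:ℝ) ^ (n - 2)) ^ 2 := by
        rw [← pow_mul, ← pow_add, e22]
      calc ((p:ℝ) - 1) ^ 2 * (p:ℝ) ^ (2 * n - 2)
          = (p:ℝ) ^ (2:ℕ) * ((p:ℝ) ^ (n - 2) * ((p:ℝ) - 1)) ^ 2 := by
            rw [e3]; ring
        _ ≤ (p:ℝ) ^ (2:ℕ) * Q ^ 2 :=
            mul_le_mul_of_nonneg_left e2 (by positivity)
    exact le_of_mul_le_mul_right (le_trans hKc hB2) hc2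
  -- identify the bad set with the set in the statement
  have hset : {a : Fin n → ZMod p | Normalized n p a ∧ ¬ XiIndep n p a g ξ}
      = emb '' ↑badB := by
    ext a
    simp only [Set.mem_setOf_eq, Set.mem_image, hbadB, Finset.coe_filter,
      Finset.mem_univ, true_and, Set.mem_setOf_eq]
    constructor
    · rintro ⟨hnorm, hbad⟩
      refine ⟨fun i => a i.1, ?_, ?_⟩
      · have : emb (fun i : I => a i.1) = a := by
          funext i
          by_cases h0 : (i : ℕ) = 0
          · simp [hemb, h0, hnorm i h0]
          · simp [hemb, h0, -Fin.val_eq_zero_iff]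
        rw [this]; exact hbad
      · funext i
        by_cases h0 : (i : ℕ) = 0
        · simp [hemb, h0, hnorm i h0]
        · simp [hemb, h0, -Fin.val_eq_zero_iff]
    · rintro ⟨b, hbad, rfl⟩
      exact ⟨hembnorm b, hbad⟩
  rw [hset, Set.ncard_image_of_injective _ hembinj, Set.ncard_coe_finset]
  exact hfinal
end

section
/- There exists N such that for all n ≥ N the following holds. For every query function g : {0,1}^n → {−1,+1}, the number of s ∈ {0,1}^n \ {0^n} such that the negative parity predicate ¬⊕_s is not 2^{−n/4}-independent from g is at most 2^{n/2+2}. -/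
/-- The positive set `S_s = {x ∈ {0,1}^n \ {0^n} : s·x ≡ 0 (mod 2)}` of the
negative parity predicate `¬⊕_s`. -/
def Spos (n : ℕ) (s : Fin n → ZMod 2) : Set (Fin n → ZMod 2) :=
  {x | x ≠ 0 ∧ ∑ i, s i * x i = 0}

/-- `¬⊕_s` is `ξ`-independent from the query function `g`. -/
def XiIndep2 (n : ℕ) (s : Fin n → ZMod 2) (g : (Fin n → ZMod 2) → ℝ) (ξ : ℝ) : Prop :=
  |expectOn (Spos n s) g - expectOn Set.univ g| ≤ ξ



noncomputable def chi (a : ZMod 2) : ℝ := if a = 0 then 1 else -1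

lemma zmod2_cases : ∀ a : ZMod 2, a = 0 ∨ a = 1 := by decide

lemma zmod2_add_self : ∀ a : ZMod 2, a + a = 0 := by decide

lemma zmod2_ne_zero : ∀ a : ZMod 2, a ≠ 0 → a = 1 := by decide

lemma chi_add (a b : ZMod 2) : chi (a + b) = chi a * chi b := by
  rcases zmod2_cases a with ha | ha <;> rcases zmod2_cases b with hb | hb <;>
    subst ha <;> subst hb <;> simp [chi] <;> norm_num <;> decide

lemma chi_zero : chi 0 = 1 := by simp [chi]

lemma chi_one : chi 1 = -1 := by simp [chi]

lemma chi_abs_le (a : ZMod 2) : |chi a| ≤ 1 := by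
  rcases zmod2_cases a with h | h <;> simp [h, chi]

lemma orth {n : ℕ} {z : Fin n → ZMod 2} (hz : z ≠ 0) :
    ∑ s : Fin n → ZMod 2, chi (∑ i, z i * s i) = 0 := by
  obtain ⟨i, hi⟩ := Function.ne_iff.mp hz
  have hzi : z i = 1 := zmod2_ne_zero _ hi
  set d : Fin n → ZMod 2 := Pi.single i 1 with hd
  have hLd : ∀ s : Fin n → ZMod 2,
      (∑ j, z j * (s + d) j) = (∑ j, z j * s j) + 1 := by
    intro s
    have : ∀ j, z j * (s + d) j = z j * s j + z j * d j := by
      intro j; simp [Pi.add_apply, mul_add]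
    rw [Finset.sum_congr rfl (fun j _ => this j), Finset.sum_add_distrib]
    congr 1
    rw [hd]
    rw [Finset.sum_eq_single i]
    · simp [hzi]
    · intro j _ hji; simp [Pi.single_apply, hji]
    · simp
  have hbij : Function.Bijective (fun s : Fin n → ZMod 2 => s + d) := by
    exact (Equiv.addRight d).bijective
  have key : ∑ s : Fin n → ZMod 2, chi (∑ j, z j * s j)
      = ∑ s : Fin n → ZMod 2, chi ((∑ j, z j * s j) + 1) := by
    refine Fintype.sum_bijective _ hbij _ _ ?_
    intro s
    rw [hLd s, add_assoc]
    have : (1 : ZMod 2) + 1 = 0 := by decide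
    rw [this, add_zero]
  have hneg : ∀ s : Fin n → ZMod 2, chi ((∑ j, z j * s j) + 1)
      = - chi (∑ j, z j * s j) := by
    intro s; rw [chi_add, chi_one]; ring
  rw [Finset.sum_congr rfl (fun s _ => hneg s), Finset.sum_neg_distrib] at key
  linarith

lemma card_V (n : ℕ) : Fintype.card (Fin n → ZMod 2) = 2 ^ n := by
  simp [Fintype.card_fun]

lemma parseval {n : ℕ} (g : (Fin n → ZMod 2) → ℝ) (hg : ∀ x, g x = 1 ∨ g x = -1) :
    ∑ s : Fin n → ZMod 2, (∑ x : Fin n → ZMod 2, g x * chi (∑ i, s i * x i)) ^ 2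
      = (2 : ℝ) ^ n * 2 ^ n := by
  have hga : ∀ x, g x * g x = 1 := by
    intro x; rcases hg x with h | h <;> rw [h] <;> norm_num
  have expand : ∀ s : Fin n → ZMod 2,
      (∑ x : Fin n → ZMod 2, g x * chi (∑ i, s i * x i)) ^ 2
      = ∑ x : Fin n → ZMod 2, ∑ y : Fin n → ZMod 2,
          g x * g y * chi (∑ i, s i * (x i + y i)) := by
    intro s
    rw [sq, Finset.sum_mul_sum]
    refine Finset.sum_congr rfl fun x _ => Finset.sum_congr rfl fun y _ => ?_
    have hsum : (∑ i, s i * (x i + y i)) = (∑ i, s i * x i) + (∑ i, s i * y i) := by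
      rw [← Finset.sum_add_distrib]
      exact Finset.sum_congr rfl fun i _ => mul_add _ _ _
    rw [hsum, chi_add]; ring
  have inner : ∀ x y : Fin n → ZMod 2,
      (∑ s : Fin n → ZMod 2, chi (∑ i, s i * (x i + y i)))
        = if x = y then ((2:ℝ) ^ n) else 0 := by
    intro x y
    by_cases hxy : x = y
    · subst hxy
      simp only [if_pos rfl]
      have h0 : ∀ i, x i + x i = 0 := fun i => zmod2_add_self _
      have : ∀ s : Fin n → ZMod 2, (∑ i, s i * (x i + x i)) = 0 := by
        intro s; simp [h0]
      rw [Finset.sum_congr rfl fun s _ => by rw [this s, chi_zero]]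
      simp [card_V]
    · rw [if_neg hxy]
      have hz : (fun i => x i + y i) ≠ 0 := by
        intro hc
        apply hxy
        funext i
        have := congrFun hc i
        simp only [Pi.zero_apply] at this
        rcases zmod2_cases (x i) with h | h <;> rcases zmod2_cases (y i) with h' | h' <;>
          simp [h, h'] at this ⊢ <;> first | rfl | (exfalso; revert this; decide)
      have := orth hz
      calc (∑ s : Fin n → ZMod 2, chi (∑ i, s i * (x i + y i)))
          = ∑ s : Fin n → ZMod 2, chi (∑ i, (x i + y i) * s i) := by
            refine Finset.sum_congr rfl fun s _ => ?_
            congr 1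
            exact Finset.sum_congr rfl fun i _ => mul_comm _ _
        _ = 0 := this
  calc ∑ s : Fin n → ZMod 2, (∑ x : Fin n → ZMod 2, g x * chi (∑ i, s i * x i)) ^ 2
      = ∑ s : Fin n → ZMod 2, ∑ x : Fin n → ZMod 2, ∑ y : Fin n → ZMod 2,
          g x * g y * chi (∑ i, s i * (x i + y i)) :=
        Finset.sum_congr rfl fun s _ => expand s
    _ = ∑ x : Fin n → ZMod 2, ∑ y : Fin n → ZMod 2, ∑ s : Fin n → ZMod 2,
          g x * g y * chi (∑ i, s i * (x i + y i)) := by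
        rw [Finset.sum_comm]
        exact Finset.sum_congr rfl fun x _ => Finset.sum_comm
    _ = ∑ x : Fin n → ZMod 2, ∑ y : Fin n → ZMod 2,
          g x * g y * (if x = y then ((2:ℝ) ^ n) else 0) := by
        refine Finset.sum_congr rfl fun x _ => Finset.sum_congr rfl fun y _ => ?_
        rw [← Finset.mul_sum, inner]
    _ = ∑ x : Fin n → ZMod 2, g x * g x * (2:ℝ) ^ n := by
        refine Finset.sum_congr rfl fun x _ => ?_
        rw [Finset.sum_eq_single x]
        · simp
        · intro y _ hyx; rw [if_neg (Ne.symm hyx), mul_zero]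
        · intro h; exact absurd (Finset.mem_univ x) h
    _ = (2:ℝ) ^ n * 2 ^ n := by
        rw [Finset.sum_congr rfl fun x _ => by rw [hga x, one_mul]]
        simp [card_V]

def kerF {n : ℕ} (s : Fin n → ZMod 2) : Finset (Fin n → ZMod 2) :=
  Finset.univ.filter fun x => ∑ i, s i * x i = 0

lemma card_kerF {n : ℕ} {s : Fin n → ZMod 2} (hs : s ≠ 0) :
    (kerF s).card = 2 ^ (n - 1) := by
  have horth : ∑ x : Fin n → ZMod 2, chi (∑ i, s i * x i) = 0 := orth hs
  have hsplit : ∑ x : Fin n → ZMod 2, chi (∑ i, s i * x i)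
      = ((kerF s).card : ℝ) - ((2 ^ n : ℕ) - (kerF s).card : ℕ) := by
    have hsfs := Finset.sum_filter_add_sum_filter_not Finset.univ
      (fun x : Fin n → ZMod 2 => ∑ i, s i * x i = 0) (fun x => chi (∑ i, s i * x i))
    rw [← hsfs]
    have h1 : ∑ x ∈ Finset.univ.filter (fun x : Fin n → ZMod 2 => ∑ i, s i * x i = 0),
        chi (∑ i, s i * x i) = ((kerF s).card : ℝ) := by
      rw [Finset.sum_congr rfl fun x hx => by
        rw [(Finset.mem_filter.mp hx).2, chi_zero]]
      simp [kerF]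
    have h2 : ∑ x ∈ Finset.univ.filter (fun x : Fin n → ZMod 2 => ¬ ∑ i, s i * x i = 0),
        chi (∑ i, s i * x i) = -(((2 ^ n : ℕ) - (kerF s).card : ℕ) : ℝ) := by
      rw [Finset.sum_congr rfl fun x hx => by
        rw [zmod2_ne_zero _ (Finset.mem_filter.mp hx).2, chi_one]]
      have hc : (Finset.univ.filter
          (fun x : Fin n → ZMod 2 => ¬ ∑ i, s i * x i = 0)).card
          = 2 ^ n - (kerF s).card := by
        have h := Finset.card_filter_add_card_filter_not (s := Finset.univ)
          (p := fun x : Fin n → ZMod 2 => ∑ i, s i * x i = 0)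
        have hcu : (Finset.univ : Finset (Fin n → ZMod 2)).card = 2 ^ n := by
          rw [Finset.card_univ, card_V]
        rw [hcu] at h
        simp only [kerF]
        generalize hA : (Finset.univ.filter
          (fun x : Fin n → ZMod 2 => ∑ i, s i * x i = 0)).card = A at h ⊢
        generalize hB : (Finset.univ.filter
          (fun x : Fin n → ZMod 2 => ¬ ∑ i, s i * x i = 0)).card = B at h ⊢
        clear * - h
        omega
      simp [hc]
    rw [h1, h2]; ring
  rw [horth] at hsplit
  have hle : (kerF s).card ≤ 2 ^ n := by
    have := Finset.card_filter_le Finset.univ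
      (fun x : Fin n → ZMod 2 => ∑ i, s i * x i = 0)
    rwa [Finset.card_univ, card_V] at this
  have h2 : 2 * (kerF s).card = 2 ^ n := by
    have : ((kerF s).card : ℝ) = ((2 ^ n - (kerF s).card : ℕ) : ℝ) := by linarith
    have h' : (kerF s).card = 2 ^ n - (kerF s).card := by exact_mod_cast this
    generalize hA : (kerF s).card = A at h' hle ⊢
    clear * - h' hle
    omega
  have hn : 1 ≤ n := by
    rcases Nat.eq_zero_or_pos n with h | h
    · exfalso; apply hs; subst h; funext i; exact absurd i.2 (by omega)
    · exact h
  have hpow : 2 ^ n = 2 * 2 ^ (n - 1) := by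
    rw [← pow_succ']
    congr 1; omega
  generalize hA : (kerF s).card = A at h2 hle ⊢
  clear * - h2 hpow
  omega

lemma zero_mem_kerF {n : ℕ} (s : Fin n → ZMod 2) : 0 ∈ kerF s := by
  simp [kerF]

lemma Spos_eq_coe {n : ℕ} (s : Fin n → ZMod 2) :
    Spos n s = ↑((kerF s).erase 0) := by
  ext x
  simp [Spos, kerF, and_comm]

lemma ncard_Spos {n : ℕ} {s : Fin n → ZMod 2} (hs : s ≠ 0) :
    (Spos n s).ncard = 2 ^ (n - 1) - 1 := by
  rw [Spos_eq_coe, Set.ncard_coe_finset, Finset.card_erase_of_mem (zero_mem_kerF s),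
    card_kerF hs]

lemma expect_univ {n : ℕ} (g : (Fin n → ZMod 2) → ℝ) :
    expectOn Set.univ g = (∑ x : Fin n → ZMod 2, g x) / 2 ^ n := by
  rw [expectOn, finsum_mem_univ, finsum_eq_sum_of_fintype, Set.ncard_univ,
    Nat.card_eq_fintype_card, card_V]
  norm_num

lemma sum_ker {n : ℕ} (g : (Fin n → ZMod 2) → ℝ) (s : Fin n → ZMod 2) :
    ∑ x ∈ kerF s, g x
      = ((∑ x : Fin n → ZMod 2, g x)
        + (∑ x : Fin n → ZMod 2, g x * chi (∑ i, s i * x i))) / 2 := by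
  rw [kerF, Finset.sum_filter]
  rw [Finset.sum_congr rfl (fun x _ => show
      (if (∑ i, s i * x i) = 0 then g x else 0)
        = (g x + g x * chi (∑ i, s i * x i)) / 2 by
    rcases zmod2_cases (∑ i, s i * x i) with h | h <;>
      rw [h] <;> simp [chi_zero, chi_one] <;> ring)]
  rw [← Finset.sum_div, Finset.sum_add_distrib]

lemma expect_Spos {n : ℕ} (g : (Fin n → ZMod 2) → ℝ) {s : Fin n → ZMod 2}
    (hs : s ≠ 0) :
    expectOn (Spos n s) g
      = (((∑ x : Fin n → ZMod 2, g x)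
          + (∑ x : Fin n → ZMod 2, g x * chi (∑ i, s i * x i))) / 2 - g 0)
        / ((2 ^ (n - 1) - 1 : ℕ) : ℝ) := by
  rw [expectOn, Spos_eq_coe, finsum_mem_coe_finset, ← Spos_eq_coe, ncard_Spos hs]
  congr 1
  have h := Finset.sum_erase_add (kerF s) g (zero_mem_kerF s)
  rw [← sum_ker g s]
  linarith

/-- for any query function `g : {0,1}^n → {-1,+1}`, at most
`2^(n/2+2)` negative parity predicates `¬⊕_s` (with `s ≠ 0^n`) are not
`2^(-n/4)`-independent from `g`. -/
theorem stmt2 : ∃ N : ℕ, ∀ n : ℕ, N ≤ n →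
    ∀ g : (Fin n → ZMod 2) → ℝ, (∀ x, g x = 1 ∨ g x = -1) →
    (({s : Fin n → ZMod 2 | s ≠ 0 ∧
        ¬ XiIndep2 n s g ((2 : ℝ) ^ (-(n : ℝ) / 4))}).ncard : ℝ)
      ≤ (2 : ℝ) ^ ((n : ℝ) / 2 + 2) := by
  use 8
  intro n hn g hg
  obtain ⟨m, rfl⟩ : ∃ m, n = m + 1 := ⟨n - 1, by omega⟩
  set T : ℝ := ∑ x : Fin (m + 1) → ZMod 2, g x with hT
  set F : (Fin (m + 1) → ZMod 2) → ℝ :=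
    fun s => ∑ x : Fin (m + 1) → ZMod 2, g x * chi (∑ i, s i * x i) with hF
  set ξ : ℝ := (2 : ℝ) ^ (-((m + 1 : ℕ) : ℝ) / 4) with hxi
  set P : ℝ := 2 ^ m with hP
  have hm : 7 ≤ m := by omega
  have hPbig : (128 : ℝ) ≤ P := by
    rw [hP]
    calc (128 : ℝ) = 2 ^ 7 := by norm_num
    _ ≤ 2 ^ m := by
        apply pow_le_pow_right₀ (by norm_num)
        omega
  have hPpos : (0 : ℝ) < P := by linarith
  have hM : ((2 ^ (m + 1 - 1) - 1 : ℕ) : ℝ) = P - 1 := by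
    have h1 : m + 1 - 1 = m := by omega
    rw [h1, hP]
    push_cast [Nat.cast_sub (Nat.one_le_two_pow)]
    norm_num
  have hMpos : (0 : ℝ) < P - 1 := by linarith
  have h2n : ((2 : ℝ) ^ (m + 1)) = 2 * P := by
    rw [hP, pow_succ]; ring
  have hxipos : 0 < ξ := Real.rpow_pos_of_pos (by norm_num) _
  have hxile : ξ ≤ 1 := by
    rw [hxi]
    apply Real.rpow_le_one_of_one_le_of_nonpos (by norm_num)
    have : (0:ℝ) ≤ ((m + 1 : ℕ) : ℝ) := Nat.cast_nonneg _
    linarith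
  set Q : ℝ := (2 : ℝ) ^ (3 * ((m + 1 : ℕ) : ℝ) / 4) with hQ
  have hQpos : 0 < Q := Real.rpow_pos_of_pos (by norm_num) _
  have hxiQ : ξ * (2 * P) = Q := by
    have h1 : (2 * P : ℝ) = (2 : ℝ) ^ (((m + 1 : ℕ) : ℝ)) := by
      rw [← h2n, ← Real.rpow_natCast 2 (m + 1)]
    rw [h1, hxi, hQ, ← Real.rpow_add (by norm_num)]
    ring_nf
  have hQbig : (64 : ℝ) ≤ Q := by
    rw [hQ]
    calc (64 : ℝ) = (2:ℝ) ^ ((6:ℕ):ℝ) := by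
          rw [Real.rpow_natCast]; norm_num
    _ ≤ (2:ℝ) ^ (3 * ((m + 1 : ℕ) : ℝ) / 4) := by
          apply Real.rpow_le_rpow_of_exponent_le (by norm_num)
          have h8 : (8 : ℝ) ≤ ((m + 1 : ℕ) : ℝ) := by exact_mod_cast hn
          push_cast at h8 ⊢
          linarith
  have hTabs : |T| ≤ 2 * P := by
    rw [← h2n, hT]
    calc |∑ x : Fin (m + 1) → ZMod 2, g x|
        ≤ ∑ x : Fin (m + 1) → ZMod 2, |g x| := Finset.abs_sum_le_sum_abs _ _
    _ = ∑ _x : Fin (m + 1) → ZMod 2, (1:ℝ) := by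
        refine Finset.sum_congr rfl fun x _ => ?_
        rcases hg x with h | h <;> rw [h] <;> norm_num
    _ = (2:ℝ) ^ (m + 1) := by
        rw [Finset.sum_const, Finset.card_univ, card_V]; simp
  have hg0 : |g 0| = 1 := by rcases hg 0 with h | h <;> rw [h] <;> norm_num
  have hBfin : ({s : Fin (m + 1) → ZMod 2 | s ≠ 0 ∧
      ¬ XiIndep2 (m + 1) s g ξ}).Finite := Set.toFinite _
  have hkey : ∀ s ∈ hBfin.toFinset, Q^2 / 4 ≤ (F s) ^ 2 := by
    intro s hsmem
    rw [Set.Finite.mem_toFinset] at hsmem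
    obtain ⟨hs0, hsbad⟩ := hsmem
    rw [XiIndep2, not_le] at hsbad
    set D : ℝ := expectOn (Spos (m + 1) s) g - expectOn Set.univ g with hD
    have hDval : D = ((T + F s) / 2 - g 0) / (P - 1) - T / (2 * P) := by
      rw [hD, expect_Spos g hs0, expect_univ, hM, h2n]
    have hFval : F s = 2 * ((P - 1) * D + g 0) - T / P := by
      rw [hDval]
      field_simp
      ring
    have habs : 2 * ((P - 1) * |D|) - (2 * |g 0| + |T| / P) ≤ |F s| := by
      have hsplit : F s = (2 * (P - 1)) * D + (2 * g 0 - T / P) := by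
        rw [hFval]; ring
      have h1 : |(2 * (P - 1)) * D| - |-(2 * g 0 - T / P)|
          ≤ |(2 * (P - 1)) * D - -(2 * g 0 - T / P)| :=
        abs_sub_abs_le_abs_sub _ _
      have h2 : |(2 * (P - 1)) * D| = 2 * ((P - 1) * |D|) := by
        rw [abs_mul, abs_of_pos (by linarith : (0:ℝ) < 2 * (P - 1))]; ring
      have h3 : |-(2 * g 0 - T / P)| ≤ 2 * |g 0| + |T| / P := by
        rw [abs_neg]
        calc |2 * g 0 - T / P| ≤ |2 * g 0| + |T / P| := abs_sub _ _
        _ = 2 * |g 0| + |T| / P := by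
            rw [abs_mul, abs_div, abs_of_pos hPpos,
              abs_of_pos (by norm_num : (0:ℝ) < 2)]
      calc 2 * ((P - 1) * |D|) - (2 * |g 0| + |T| / P)
          ≤ |(2 * (P - 1)) * D| - |-(2 * g 0 - T / P)| := by
            rw [h2]; linarith
        _ ≤ |(2 * (P - 1)) * D - -(2 * g 0 - T / P)| := h1
        _ = |F s| := by rw [hsplit]; ring_nf
    have hTP : |T| / P ≤ 2 := by
      rw [div_le_iff₀ hPpos]; linarith
    have hDlb : ξ < |D| := hsbad
    have hFlb : Q / 2 ≤ |F s| := by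
      have e1 : 2 * ((P - 1) * ξ) - 4 ≤ 2 * ((P - 1) * |D|) - (2 * |g 0| + |T| / P) := by
        have : (P - 1) * ξ ≤ (P - 1) * |D| := by
          apply mul_le_mul_of_nonneg_left (le_of_lt hDlb) (le_of_lt hMpos)
        rw [hg0]
        linarith
      have e2 : Q - 6 ≤ 2 * ((P - 1) * ξ) - 4 := by
        have : 2 * ((P - 1) * ξ) = ξ * (2 * P) - 2 * ξ := by ring
        rw [this, hxiQ]
        linarith
      have e3 : Q / 2 ≤ Q - 6 := by linarith
      linarith
    calc Q^2/4 = (Q/2)^2 := by ring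
    _ ≤ |F s| ^ 2 := by
        apply pow_le_pow_left₀ (by positivity) hFlb
    _ = (F s) ^ 2 := sq_abs _
  have hcount : (hBfin.toFinset.card : ℝ) * (Q^2/4) ≤ (2:ℝ)^(m+1) * 2^(m+1) := by
    calc (hBfin.toFinset.card : ℝ) * (Q^2/4)
        = ∑ _s ∈ hBfin.toFinset, Q^2/4 := by
          rw [Finset.sum_const, nsmul_eq_mul]
      _ ≤ ∑ s ∈ hBfin.toFinset, (F s)^2 := Finset.sum_le_sum hkey
      _ ≤ ∑ s : Fin (m + 1) → ZMod 2, (F s)^2 := by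
          apply Finset.sum_le_sum_of_subset_of_nonneg (Finset.subset_univ _)
          intro s _ _; positivity
      _ = (2:ℝ)^(m+1) * 2^(m+1) := by rw [hF]; exact parseval g hg
  have hBcard : (({s : Fin (m + 1) → ZMod 2 | s ≠ 0 ∧
      ¬ XiIndep2 (m + 1) s g ξ}).ncard : ℝ) = (hBfin.toFinset.card : ℝ) := by
    rw [Set.ncard_eq_toFinset_card _ hBfin]
  have hfinal : (2:ℝ)^(m+1) * 2^(m+1) * 4 = (2 : ℝ) ^ (((m + 1 : ℕ) : ℝ) / 2 + 2) * Q^2 := by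
    have hq2 : Q^2 = (2:ℝ) ^ (3 * ((m + 1 : ℕ) : ℝ) / 2) := by
      rw [hQ, sq, ← Real.rpow_add (by norm_num)]
      ring_nf
    have hl : (2:ℝ)^(m+1) * 2^(m+1) = (2:ℝ) ^ (2 * ((m + 1 : ℕ) : ℝ)) := by
      rw [← Real.rpow_natCast 2 (m + 1), ← Real.rpow_add (by norm_num)]
      ring_nf
    rw [hq2, hl, ← Real.rpow_add (by norm_num)]
    have h4 : (4:ℝ) = (2:ℝ) ^ ((2:ℕ):ℝ) := by rw [Real.rpow_natCast]; norm_num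
    rw [h4, ← Real.rpow_add (by norm_num)]
    congr 1
    push_cast
    ring
  rw [hBcard]
  have hQ2pos : (0:ℝ) < Q^2 := by positivity
  rw [← mul_le_mul_iff_of_pos_right hQ2pos]
  calc (hBfin.toFinset.card : ℝ) * Q^2
      = ((hBfin.toFinset.card : ℝ) * (Q^2/4)) * 4 := by ring
    _ ≤ ((2:ℝ)^(m+1) * 2^(m+1)) * 4 := by linarith
    _ = (2 : ℝ) ^ (((m + 1 : ℕ) : ℝ) / 2 + 2) * Q^2 := hfinal
end

section
/- Let p be a prime and n ≥ 2. Let a, b ∈ (ℤ_p)^n be distinct vectors with a[0] = b[0] = 1. Then the number of x ∈ X̂_{n,p} at which the normalized booleanized linear functions L_a and L_b agree, i.e. |{x ∈ X̂_{n,p} : L_a(x) = L_b(x)}|, is exactly (p² − 2p + 2)·p^{n−2} − p. -/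
noncomputable def dotL (n p : ℕ) (v : Fin n → ZMod p) : (Fin n → ZMod p) →ₗ[ZMod p] ZMod p where
  toFun x := ∑ i, v i * x i
  map_add' x y := by simp [mul_add, Finset.sum_add_distrib]
  map_smul' c x := by simp [Finset.mul_sum, mul_left_comm]

lemma dotL_apply (n p : ℕ) (v x : Fin n → ZMod p) : dotL n p v x = ∑ i, v i * x i := rfl

lemma dotL_single (n p : ℕ) (v : Fin n → ZMod p) (j : Fin n) (c : ZMod p) :
    dotL n p v (Pi.single j c) = v j * c := by
  simp [dotL, Pi.single_apply, mul_ite, Finset.sum_ite_eq']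

open Finset in
/-- fiber cardinality of a surjective linear map `(Fin n → ZMod p) → (ZMod p)²`. -/
lemma fiber_card_s7 (n p : ℕ) [hpf : Fact p.Prime] (hn : 2 ≤ n)
    (f : (Fin n → ZMod p) →ₗ[ZMod p] (ZMod p × ZMod p)) (hsurj : Function.Surjective f)
    (y : ZMod p × ZMod p) :
    (Finset.univ.filter (fun x => f x = y)).card = p ^ (n - 2) := by
  classical
  obtain ⟨x₀, hx₀⟩ := hsurj y
  have e : {x : Fin n → ZMod p // f x = y} ≃ LinearMap.ker f :=
    { toFun := fun x => ⟨x.1 - x₀, by simp [LinearMap.mem_ker, map_sub, x.2, hx₀]⟩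
      invFun := fun k => ⟨x₀ + k.1, by
        have := k.2
        simp only [LinearMap.mem_ker] at this
        simp [map_add, this, hx₀]⟩
      left_inv := fun x => by ext; simp
      right_inv := fun k => by ext; simp }
  have hker : Module.finrank (ZMod p) (LinearMap.ker f) = n - 2 := by
    have h1 := LinearMap.finrank_range_add_finrank_ker f
    rw [LinearMap.range_eq_top.mpr hsurj, finrank_top] at h1
    have h2 : Module.finrank (ZMod p) (ZMod p × ZMod p) = 2 := by
      simp [Module.finrank_prod]
    rw [h2, Module.finrank_fin_fun] at h1
    omega
  calc (Finset.univ.filter (fun x => f x = y)).card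
      = Fintype.card {x : Fin n → ZMod p // f x = y} := (Fintype.card_subtype _).symm
    _ = Fintype.card (LinearMap.ker f) := Fintype.card_congr e
    _ = p ^ (n - 2) := by
        rw [Module.card_eq_pow_finrank (K := ZMod p), hker, ZMod.card]

open Finset in
lemma S_card (p : ℕ) [hpf : Fact p.Prime] :
    (Finset.univ.filter (fun y : ZMod p × ZMod p => (y.1 = 1 ↔ y.1 - y.2 = 1))).card
      = p ^ 2 - 2 * p + 2 := by
  classical
  have hp2 : 2 ≤ p := hpf.out.two_le
  set S := Finset.univ.filter (fun y : ZMod p × ZMod p => (y.1 = 1 ↔ y.1 - y.2 = 1)) with hS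
  have hmap : ∀ y ∈ S, Prod.snd y ∈ (Finset.univ : Finset (ZMod p)) := fun y _ => mem_univ _
  have h1 : S.card = ∑ v : ZMod p, (S.filter (fun y => y.2 = v)).card :=
    card_eq_sum_card_fiberwise hmap
  have hfib : ∀ v : ZMod p, (S.filter (fun y => y.2 = v)).card
      = (Finset.univ.filter (fun u : ZMod p => (u = 1 ↔ u - v = 1))).card := by
    intro v
    apply Finset.card_bij (fun y _ => y.1)
    · intro y hy
      simp only [hS, mem_filter, mem_univ, true_and] at hy ⊢
      rw [← hy.2]; exact hy.1
    · intro y hy z hz h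
      simp only [hS, mem_filter] at hy hz
      exact Prod.ext h (hy.2.trans hz.2.symm)
    · intro u hu
      simp only [mem_filter, mem_univ, true_and] at hu
      exact ⟨(u, v), by simp [hS, hu], rfl⟩
  have hzero : (Finset.univ.filter (fun u : ZMod p => (u = 1 ↔ u - (0:ZMod p) = 1))).card = p := by
    rw [Finset.filter_true_of_mem (by simp), card_univ, ZMod.card]
  have hne : ∀ v : ZMod p, v ≠ 0 →
      (Finset.univ.filter (fun u : ZMod p => (u = 1 ↔ u - v = 1))).card = p - 2 := by
    intro v hv
    have : Finset.univ.filter (fun u : ZMod p => (u = 1 ↔ u - v = 1))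
        = Finset.univ \ {1, 1 + v} := by
      ext u
      simp only [mem_filter, mem_univ, true_and, mem_sdiff, mem_insert, mem_singleton]
      constructor
      · rintro h
        push_neg
        constructor
        · intro h1
          have := h.mp h1
          rw [h1] at this
          apply hv
          linear_combination -this
        · intro h1
          have hu : u - v = 1 := by rw [h1]; ring
          have h2 := h.mpr hu
          apply hv
          linear_combination h2 - h1
      · rintro h
        push_neg at h
        obtain ⟨h1, h2⟩ := h
        constructor
        · intro h; exact absurd h h1
        · intro h
          exfalso; apply h2
          linear_combination h
    rw [this, Finset.card_sdiff_of_subset (Finset.subset_univ _), card_univ, ZMod.card]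
    have h12 : (1 : ZMod p) ≠ 1 + v := by
      intro h; apply hv; linear_combination -h
    rw [Finset.card_insert_of_notMem (by simpa using h12), Finset.card_singleton]
  rw [h1]
  have key : ∑ v : ZMod p, (S.filter (fun y => y.2 = v)).card
      = (p - 1) * (p - 2) + p := by
    rw [Finset.sum_eq_sum_sdiff_singleton_add (mem_univ (0:ZMod p)), hfib 0, hzero]
    have hc : ∀ v ∈ Finset.univ \ {(0:ZMod p)}, (S.filter (fun y => y.2 = v)).card = p - 2 := by
      intro v hv
      rw [hfib v, hne v (by simpa using (Finset.mem_sdiff.mp hv).2)]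
    rw [Finset.sum_congr rfl hc, Finset.sum_const, smul_eq_mul,
        Finset.card_sdiff_of_subset (by simp), card_univ, ZMod.card, Finset.card_singleton]
  rw [key]
  obtain ⟨q, rfl⟩ : ∃ q, p = q + 2 := ⟨p - 2, by omega⟩
  have e1 : q + 2 - 1 = q + 1 := by omega
  have e2 : q + 2 - 2 = q := by omega
  rw [e1, e2]
  have hsq : (q + 2) ^ 2 = q * q + 4 * q + 4 := by ring
  have hl : (q + 1) * q = q * q + q := by ring
  omega

open Finset in
/-- two distinct normalized booleanized linear functions `L_a` and
`L_b` agree at exactly `(p² - 2p + 2)·p^(n-2) - p` points of `X̂_{n,p}`. -/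
theorem stmt7 (n p : ℕ) (hp : p.Prime) (hn : 2 ≤ n)
    (a b : Fin n → ZMod p) (hab : a ≠ b)
    (ha : ∀ i : Fin n, (i : ℕ) = 0 → a i = 1)
    (hb : ∀ i : Fin n, (i : ℕ) = 0 → b i = 1) :
    ({x ∈ Xhat n p | ((∑ i, a i * x i = 1) ↔ (∑ i, b i * x i = 1))}).ncard
      = (p ^ 2 - 2 * p + 2) * p ^ (n - 2) - p := by
  classical
  haveI : Fact p.Prime := ⟨hp⟩
  set i0 : Fin n := ⟨0, by omega⟩ with hi0
  have ha0 : a i0 = 1 := ha i0 rfl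
  have hb0 : b i0 = 1 := hb i0 rfl
  set f : (Fin n → ZMod p) →ₗ[ZMod p] (ZMod p × ZMod p) :=
    (dotL n p a).prod (dotL n p (a - b)) with hf
  -- surjectivity
  have hsurj : Function.Surjective f := by
    rw [← LinearMap.range_eq_top]
    obtain ⟨j, hj⟩ := Function.ne_iff.mp hab
    have hj' : a j - b j ≠ 0 := sub_ne_zero.mpr hj
    have hfx1 : f (Pi.single i0 1) = (1, 0) := by
      simp [hf, LinearMap.prod_apply, dotL_single, ha0, Pi.sub_apply, hb0]
    have hfx2 : f (Pi.single j (a j - b j)⁻¹) = (a j * (a j - b j)⁻¹, 1) := by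
      simp [hf, LinearMap.prod_apply, dotL_single, Pi.sub_apply,
        mul_inv_cancel₀ hj']
    rw [eq_top_iff]
    rintro ⟨u, v⟩ -
    refine ⟨(u - v * (a j * (a j - b j)⁻¹)) • (Pi.single i0 1 : Fin n → ZMod p)
        + v • (Pi.single j (a j - b j)⁻¹ : Fin n → ZMod p), ?_⟩
    rw [map_add, map_smul, map_smul, hfx1, hfx2]
    simp [Prod.ext_iff]
  -- second component relation
  have hbsum : ∀ x : Fin n → ZMod p, (f x).1 - (f x).2 = ∑ i, b i * x i := by
    intro x
    simp only [hf, LinearMap.prod_apply, Function.prod, dotL_apply, Pi.sub_apply]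
    rw [← Finset.sum_sub_distrib]
    exact Finset.sum_congr rfl (fun i _ => by ring)
  have hasum : ∀ x : Fin n → ZMod p, (f x).1 = ∑ i, a i * x i := fun x => rfl
  -- the three finsets
  set A := Finset.univ.filter
    (fun x : Fin n → ZMod p => ((∑ i, a i * x i = 1) ↔ (∑ i, b i * x i = 1))) with hA
  set B := Finset.univ.filter (fun x : Fin n → ZMod p => x ∉ Xhat n p) with hB
  set F := Finset.univ.filter
    (fun x : Fin n → ZMod p =>
      x ∈ Xhat n p ∧ ((∑ i, a i * x i = 1) ↔ (∑ i, b i * x i = 1))) with hF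
  -- membership in B described
  have hBmem : ∀ x : Fin n → ZMod p, x ∈ B ↔ ∀ i : Fin n, (i : ℕ) ≠ 0 → x i = 0 := by
    intro x
    simp only [hB, Finset.mem_filter, Finset.mem_univ, true_and, Xhat, Set.mem_setOf_eq]
    push_neg
    rfl
  -- on B, both sums are x i0
  have hsumB : ∀ (v : Fin n → ZMod p), v i0 = 1 → ∀ x ∈ B, ∑ i, v i * x i = x i0 := by
    intro v hv x hx
    rw [Finset.sum_eq_single i0]
    · rw [hv, one_mul]
    · intro i _ hi
      rw [(hBmem x).mp hx i (by
        intro h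
        exact hi (Fin.ext (by simp [hi0, h]))), mul_zero]
    · intro h; exact absurd (Finset.mem_univ i0) h
  have hBA : B ⊆ A := by
    intro x hx
    rw [hA, Finset.mem_filter]
    refine ⟨Finset.mem_univ x, ?_⟩
    rw [hsumB a ha0 x hx, hsumB b hb0 x hx]
  have hFAB : F = A \ B := by
    ext x
    simp only [hF, hA, hB, Finset.mem_filter, Finset.mem_sdiff, Finset.mem_univ, true_and]
    tauto
  -- card B = p
  have hcardB : B.card = p := by
    have : B = Finset.univ.image (fun t : ZMod p => (Pi.single i0 t : Fin n → ZMod p)) := by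
      ext x
      rw [hBmem, Finset.mem_image]
      constructor
      · intro h
        refine ⟨x i0, Finset.mem_univ _, funext fun i => ?_⟩
        rcases eq_or_ne i i0 with rfl | hi
        · simp
        · rw [Pi.single_apply, if_neg hi, h i (by
            intro h0
            exact hi (Fin.ext (by simp [hi0, h0])))]
      · rintro ⟨t, -, rfl⟩ i hi
        rw [Pi.single_apply, if_neg (by
          intro h0
          exact hi (by simp [h0, hi0]))]
    rw [this, Finset.card_image_of_injective _ (fun s t hst => by
      simpa using congr_fun hst i0), Finset.card_univ, ZMod.card]
  -- card A via fibers
  set S := Finset.univ.filter (fun y : ZMod p × ZMod p => (y.1 = 1 ↔ y.1 - y.2 = 1)) with hS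
  have hcardA : A.card = (p ^ 2 - 2 * p + 2) * p ^ (n - 2) := by
    have hmap : ∀ x ∈ A, f x ∈ S := by
      intro x hx
      rw [hA, Finset.mem_filter] at hx
      rw [hS, Finset.mem_filter]
      exact ⟨Finset.mem_univ _, by rw [hbsum x, hasum x]; exact hx.2⟩
    have h1 : A.card = ∑ y ∈ S, (A.filter (fun x => f x = y)).card :=
      Finset.card_eq_sum_card_fiberwise hmap
    have h2 : ∀ y ∈ S, (A.filter (fun x => f x = y)).card = p ^ (n - 2) := by
      intro y hy
      have hAf : A.filter (fun x => f x = y) = Finset.univ.filter (fun x => f x = y) := by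
        ext x
        simp only [Finset.mem_filter, Finset.mem_univ, true_and, hA]
        constructor
        · exact fun h => h.2
        · intro hxy
          refine ⟨?_, hxy⟩
          rw [hS, Finset.mem_filter] at hy
          have e1 : ∑ i, a i * x i = y.1 := by rw [← hasum x, hxy]
          have e2 : ∑ i, b i * x i = y.1 - y.2 := by rw [← hbsum x, hxy]
          rw [e1, e2]
          exact hy.2
      rw [hAf, fiber_card_s7 n p hn f hsurj y]
    rw [h1, Finset.sum_congr rfl h2, Finset.sum_const, smul_eq_mul, hS, S_card p]
  -- conclude
  have hGF : ({x ∈ Xhat n p | ((∑ i, a i * x i = 1) ↔ (∑ i, b i * x i = 1))}) = ↑F := by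
    ext x
    simp [hF, Set.mem_setOf_eq]
  rw [hGF, Set.ncard_coe_finset, hFAB, Finset.card_sdiff_of_subset hBA, hcardA, hcardB]
end

section
/- Let p be a prime and n ≥ 2. For a ∈ (ℤ_p)^n define L̃_a : X̂_{n,p} → {−1,+1} by L̃_a(x) = 2·L_a(x) − 1, and equip real-valued functions on X̂_{n,p} with the inner product ⟨f,g⟩ = (1/(p^n − p)) Σ_{x∈X̂_{n,p}} f(x)g(x). Then for any two distinct a, b ∈ (ℤ_p)^n with a[0] = b[0] = 1, ⟨L̃_a, L̃_b⟩ = ((p² − 4p + 4)·p^{n−2} − p) / (p^n − p); in particular this value is the same for every pair of distinct normalized booleanized linear functions. -/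
lemma fiber_card_s12 {M N : Type*} [AddCommGroup M] [AddCommGroup N] [Fintype M] [Fintype N]
    [DecidableEq N] (f : M →+ N) (hf : Function.Surjective f) (y : N) :
    (Finset.univ.filter (fun x => f x = y)).card * Fintype.card N = Fintype.card M := by
  classical
  obtain ⟨x0, hx0⟩ := hf y
  have e1 : {x // f x = y} ≃ f.ker :=
    { toFun := fun z => ⟨z.1 - x0, by simp [AddMonoidHom.mem_ker, map_sub, z.2, hx0]⟩
      invFun := fun k => ⟨k.1 + x0, by
        have hk : f k.1 = 0 := k.2
        simp [map_add, hk, hx0]⟩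
      left_inv := fun z => by simp
      right_inv := fun k => by simp }
  have h1 : (Finset.univ.filter (fun x => f x = y)).card = Nat.card f.ker := by
    rw [← Fintype.card_subtype, Fintype.card_congr e1, Nat.card_eq_fintype_card]
  have h3 := AddSubgroup.card_eq_card_quotient_mul_card_addSubgroup (f.ker)
  have h4 : Nat.card (M ⧸ f.ker) = Nat.card N :=
    Nat.card_congr (QuotientAddGroup.quotientKerEquivOfSurjective f hf).toEquiv
  rw [h1, ← Nat.card_eq_fintype_card, ← Nat.card_eq_fintype_card, h3, h4]; ring

/-- dot product as an `AddMonoidHom`. -/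
def dotHom {n p : ℕ} (a : Fin n → ZMod p) : (Fin n → ZMod p) →+ ZMod p where
  toFun x := ∑ i, a i * x i
  map_zero' := by simp
  map_add' x y := by simp [mul_add, Finset.sum_add_distrib]

lemma dot_single {n p : ℕ} [NeZero p] (a : Fin n → ZMod p) (j : Fin n) (v : ZMod p) :
    dotHom a (Pi.single j v) = a j * v := by
  simp [dotHom, Pi.single_apply, mul_ite]

/-- any two distinct `±1`-valued normalized booleanized linear
functions `L̃_a = 2·L_a - 1` and `L̃_b` have inner product
`((p² - 4p + 4)·p^(n-2) - p) / (pⁿ - p)` with respect to the normalized inner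
product on functions over `X̂_{n,p}`. -/
theorem stmt12 (n p : ℕ) (hp : p.Prime) (hn : 2 ≤ n)
    (a b : Fin n → ZMod p) (hab : a ≠ b)
    (ha : ∀ i : Fin n, (i : ℕ) = 0 → a i = 1)
    (hb : ∀ i : Fin n, (i : ℕ) = 0 → b i = 1) :
    (1 / ((p : ℝ) ^ n - p)) *
        ∑ᶠ x ∈ Xhat n p,
          (2 * (if ∑ i, a i * x i = 1 then (1 : ℝ) else 0) - 1) *
            (2 * (if ∑ i, b i * x i = 1 then (1 : ℝ) else 0) - 1)
      = (((p : ℝ) ^ 2 - 4 * p + 4) * (p : ℝ) ^ (n - 2) - p) / ((p : ℝ) ^ n - p) := by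
  classical
  obtain ⟨m, rfl⟩ : ∃ m, n = m + 2 := ⟨n - 2, by omega⟩
  haveI : Fact p.Prime := ⟨hp⟩
  haveI : NeZero p := ⟨hp.pos.ne'⟩
  have hp2 : (2 : ℝ) ≤ p := by exact_mod_cast hp.two_le
  have ha0 : a 0 = 1 := ha 0 (by simp)
  have hb0 : b 0 = 1 := hb 0 (by simp)
  have hcardM : Fintype.card (Fin (m + 2) → ZMod p) = p ^ (m + 2) := by
    simp [Fintype.card_fun, ZMod.card]
  have hsurj_a : Function.Surjective (dotHom a) := fun s =>
    ⟨Pi.single (0 : Fin (m + 2)) s, by rw [dot_single, ha0, one_mul]⟩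
  set d : Fin (m + 2) → ZMod p := a - b with hd
  have hd0 : d 0 = 0 := by simp [hd, ha0, hb0]
  obtain ⟨j, hj⟩ : ∃ j, d j ≠ 0 := by
    by_contra h
    push_neg at h
    exact hab (by ext i; have := h i; simpa [hd, sub_eq_zero] using this)
  set F : (Fin (m + 2) → ZMod p) →+ (ZMod p × ZMod p) :=
    { toFun := fun x => (dotHom a x, dotHom d x)
      map_zero' := by simp
      map_add' := fun x y => by simp [Prod.ext_iff] } with hF
  have hFapp : ∀ x, F x = (dotHom a x, dotHom d x) := fun _ => rfl
  have hsurj_F : Function.Surjective F := by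
    rintro ⟨s, t⟩
    refine ⟨Pi.single j (t * (d j)⁻¹) + Pi.single (0 : Fin (m + 2)) (s - a j * (t * (d j)⁻¹)), ?_⟩
    rw [hFapp, map_add, map_add, dot_single, dot_single, dot_single, dot_single,
      Prod.mk.injEq]
    constructor
    · rw [ha0]; ring
    · rw [hd0]
      field_simp
      ring
  -- full-space counts
  have hcard_a' : ∀ c : Fin (m + 2) → ZMod p, Function.Surjective (dotHom c) →
      (Finset.univ.filter (fun x => dotHom c x = 1)).card = p ^ (m + 1) := by
    intro c hc
    have := fiber_card_s12 (dotHom c) hc 1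
    rw [hcardM, ZMod.card] at this
    exact Nat.eq_of_mul_eq_mul_right hp.pos (by rw [this, ← pow_succ])
  have hcard_a := hcard_a' a hsurj_a
  have hsurj_b : Function.Surjective (dotHom b) := fun s =>
    ⟨Pi.single (0 : Fin (m + 2)) s, by rw [dot_single, hb0, one_mul]⟩
  have hcard_b := hcard_a' b hsurj_b
  have hcard_ab : (Finset.univ.filter (fun x => F x = (1, 0))).card = p ^ m := by
    have := fiber_card_s12 F hsurj_F (1, 0)
    rw [hcardM, Fintype.card_prod, ZMod.card] at this
    have hpp : 0 < p * p := Nat.mul_pos hp.pos hp.pos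
    refine Nat.eq_of_mul_eq_mul_right hpp ?_
    rw [this, ← mul_assoc, ← pow_succ, ← pow_succ]
  have hFiff : ∀ x, F x = (1, 0) ↔ (dotHom a x = 1 ∧ dotHom b x = 1) := by
    intro x
    rw [hFapp, Prod.mk.injEq]
    have hdab : dotHom d x = dotHom a x - dotHom b x := by
      simp [dotHom, hd, sub_mul, Finset.sum_sub_distrib]
    constructor
    · rintro ⟨h1, h2⟩
      rw [hdab, h1, sub_eq_zero] at h2
      exact ⟨h1, h2.symm⟩
    · rintro ⟨h1, h2⟩
      rw [hdab, h1, h2]; simp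
  -- complement of Xhat
  have hnotX : ∀ x : Fin (m + 2) → ZMod p,
      x ∉ Xhat (m + 2) p ↔ x = Pi.single (0 : Fin (m + 2)) (x 0) := by
    intro x
    constructor
    · intro h
      simp only [Xhat, Set.mem_setOf_eq, not_exists, not_and, not_not] at h
      funext i
      by_cases hi : i = 0
      · subst hi; simp
      · rw [Pi.single_eq_of_ne hi]
        exact h i (fun h0 => hi (Fin.ext (by rw [h0, Fin.val_zero])))
    · intro h
      simp only [Xhat, Set.mem_setOf_eq, not_exists, not_and, not_not]
      intro i hi
      rw [h]
      exact Pi.single_eq_of_ne (fun h0 => hi (by rw [h0, Fin.val_zero])) _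
  -- finsets over Xhat
  set T := (Set.toFinite (Xhat (m + 2) p)).toFinset with hT
  have hmemT : ∀ x, x ∈ T ↔ x ∈ Xhat (m + 2) p := fun x => Set.Finite.mem_toFinset _
  have hsplit : ∀ (s : Finset (Fin (m + 2) → ZMod p)),
      (s.filter (fun x => x ∈ Xhat (m + 2) p)).card
        + (s.filter (fun x => x ∉ Xhat (m + 2) p)).card = s.card := fun s =>
    Finset.card_filter_add_card_filter_not (fun x => x ∈ Xhat (m + 2) p)
  have hsingle_notX : Pi.single (0 : Fin (m + 2)) (1 : ZMod p) ∉ Xhat (m + 2) p := by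
    rw [hnotX]; simp
  have e_a : ∀ c : Fin (m + 2) → ZMod p, c 0 = 1 →
      (Finset.univ.filter (fun x => dotHom c x = 1)).card = p ^ (m + 1) →
      (T.filter fun x => dotHom c x = 1).card + 1 = p ^ (m + 1) := by
    intro c hc hcard
    have h := hsplit (Finset.univ.filter (fun x => dotHom c x = 1))
    have h1 : (Finset.univ.filter (fun x => dotHom c x = 1)).filter
        (fun x => x ∈ Xhat (m + 2) p) = T.filter (fun x => dotHom c x = 1) := by
      ext x; simp [hmemT x, and_comm]
    have h2 : (Finset.univ.filter (fun x => dotHom c x = 1)).filter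
        (fun x => x ∉ Xhat (m + 2) p) = {Pi.single (0 : Fin (m + 2)) (1 : ZMod p)} := by
      ext x
      simp only [Finset.mem_filter, Finset.mem_univ, true_and, Finset.mem_singleton]
      constructor
      · rintro ⟨hx1, hx2⟩
        have hx := (hnotX x).1 hx2
        rw [hx, dot_single, hc, one_mul] at hx1
        rw [hx, hx1]
      · rintro rfl
        exact ⟨by rw [dot_single, hc, one_mul], hsingle_notX⟩
    rw [h1, h2, Finset.card_singleton, hcard] at h
    exact h
  have e_ab : (T.filter fun x => dotHom a x = 1 ∧ dotHom b x = 1).card + 1 = p ^ m := by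
    have h := hsplit (Finset.univ.filter (fun x => dotHom a x = 1 ∧ dotHom b x = 1))
    have h1 : (Finset.univ.filter (fun x => dotHom a x = 1 ∧ dotHom b x = 1)).filter
        (fun x => x ∈ Xhat (m + 2) p)
        = T.filter (fun x => dotHom a x = 1 ∧ dotHom b x = 1) := by
      ext x; simp only [Finset.mem_filter, Finset.mem_univ, true_and, hmemT x]
      tauto
    have h2 : (Finset.univ.filter (fun x => dotHom a x = 1 ∧ dotHom b x = 1)).filter
        (fun x => x ∉ Xhat (m + 2) p) = {Pi.single (0 : Fin (m + 2)) (1 : ZMod p)} := by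
      ext x
      simp only [Finset.mem_filter, Finset.mem_univ, true_and, Finset.mem_singleton]
      constructor
      · rintro ⟨⟨hx1, _⟩, hx2⟩
        have hx := (hnotX x).1 hx2
        rw [hx, dot_single, ha0, one_mul] at hx1
        rw [hx, hx1]
      · rintro rfl
        exact ⟨⟨by rw [dot_single, ha0, one_mul], by rw [dot_single, hb0, one_mul]⟩,
          hsingle_notX⟩
    have hflt : (Finset.univ.filter fun x => dotHom a x = 1 ∧ dotHom b x = 1)
        = Finset.univ.filter (fun x => F x = (1, 0)) := by
      ext x; simp [hFiff x]
    rw [h1, h2, Finset.card_singleton, hflt, hcard_ab] at h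
    exact h
  have e_T : T.card + p = p ^ (m + 2) := by
    have h := hsplit Finset.univ
    have h1 : Finset.univ.filter (fun x : Fin (m + 2) → ZMod p => x ∈ Xhat (m + 2) p) = T := by
      ext x; simp [hmemT x]
    have h2 : Finset.univ.filter (fun x : Fin (m + 2) → ZMod p => x ∉ Xhat (m + 2) p)
        = Finset.univ.image (fun t : ZMod p => Pi.single (0 : Fin (m + 2)) t) := by
      ext x
      simp only [Finset.mem_filter, Finset.mem_univ, true_and, Finset.mem_image]
      rw [hnotX]
      constructor
      · intro hx; exact ⟨x 0, hx.symm⟩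
      · rintro ⟨t, rfl⟩; simp
    rw [h1, h2, Finset.card_image_of_injective _ (Pi.single_injective _),
      Finset.card_univ, Finset.card_univ, ZMod.card, hcardM] at h
    exact h
  -- cast the counts to ℝ
  have c_a : ((T.filter fun x => dotHom a x = 1).card : ℝ) = (p : ℝ) ^ (m + 1) - 1 := by
    have h := congrArg (Nat.cast : ℕ → ℝ) (e_a a ha0 hcard_a); push_cast at h; linarith
  have c_b : ((T.filter fun x => dotHom b x = 1).card : ℝ) = (p : ℝ) ^ (m + 1) - 1 := by
    have h := congrArg (Nat.cast : ℕ → ℝ) (e_a b hb0 hcard_b); push_cast at h; linarith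
  have c_ab : ((T.filter fun x => dotHom a x = 1 ∧ dotHom b x = 1).card : ℝ)
      = (p : ℝ) ^ m - 1 := by
    have h := congrArg (Nat.cast : ℕ → ℝ) e_ab; push_cast at h; linarith
  have c_T : ((T.card : ℕ) : ℝ) = (p : ℝ) ^ (m + 2) - p := by
    have h := congrArg (Nat.cast : ℕ → ℝ) e_T; push_cast at h; linarith
  -- rewrite the finsum as a finset sum and expand
  rw [finsum_mem_eq_finite_toFinset_sum _ (Set.toFinite (Xhat (m + 2) p))]
  have hpt : ∀ x ∈ T, (2 * (if ∑ i, a i * x i = 1 then (1 : ℝ) else 0) - 1) *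
      (2 * (if ∑ i, b i * x i = 1 then (1 : ℝ) else 0) - 1)
      = 4 * (if dotHom a x = 1 ∧ dotHom b x = 1 then (1 : ℝ) else 0)
        - 2 * (if dotHom a x = 1 then (1 : ℝ) else 0)
        - 2 * (if dotHom b x = 1 then (1 : ℝ) else 0) + 1 := by
    intro x _
    have h1 : (∑ i, a i * x i) = dotHom a x := rfl
    have h2 : (∑ i, b i * x i) = dotHom b x := rfl
    rw [h1, h2]
    by_cases hA : dotHom a x = 1 <;> by_cases hB : dotHom b x = 1 <;>
      simp [hA, hB] <;> ring
  rw [← hT, Finset.sum_congr rfl hpt]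
  rw [Finset.sum_add_distrib, Finset.sum_sub_distrib, Finset.sum_sub_distrib,
    ← Finset.mul_sum, ← Finset.mul_sum, ← Finset.mul_sum, Finset.sum_boole, Finset.sum_boole,
    Finset.sum_boole, Finset.sum_const, nsmul_eq_mul, mul_one]
  rw [c_a, c_b, c_ab, c_T]
  -- final arithmetic
  have hm2 : (m + 2) - 2 = m := by omega
  rw [hm2]
  have h1p : (1 : ℝ) ≤ (p : ℝ) ^ m := one_le_pow₀ (by linarith)
  have hlt : (p : ℝ) < (p : ℝ) ^ (m + 2) := by
    have h0 : (0 : ℝ) < p := by linarith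
    have e : (p : ℝ) ^ (m + 2) = (p : ℝ) ^ m * (p : ℝ) * (p : ℝ) := by ring
    have h2 : (1 : ℝ) * (p : ℝ) ≤ (p : ℝ) ^ m * (p : ℝ) :=
      mul_le_mul_of_nonneg_right h1p h0.le
    have h3 : (1 : ℝ) * (p : ℝ) * (p : ℝ) ≤ (p : ℝ) ^ m * (p : ℝ) * (p : ℝ) :=
      mul_le_mul_of_nonneg_right h2 h0.le
    have h4 : (2 : ℝ) * (p : ℝ) ≤ (p : ℝ) * (p : ℝ) :=
      mul_le_mul_of_nonneg_right hp2 h0.le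
    linarith [e, h3, h4]
  have hne : (p : ℝ) ^ (m + 2) - (p : ℝ) ≠ 0 := by linarith
  field_simp
  ring
end
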